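/- arXiv:2001.07642 — 7 statements merged into one kernel-verified Lean document; each statement's English description precedes it below -/
import Mathlib

section
/- Let H be a set of bipartite graphs over the vertices of K_{n,m}, and let f_H be the graph cover function of H. Then in the unique real multilinear polynomial representing f_H, every monomial with nonzero coefficient corresponds to an H-covered graph; explicitly, the coefficient of the monomial of a graph G equals Σ over nonempty S ⊆ H with ∪_{H∈S}E(H) = E(G) of (−1)^{|S|+1}. -/
open Finset
open scoped Classical

/-- A graph (edge set) `G` is `𝓗`-covered if it is the union of a nonempty subfamily of `𝓗`. -/
def covered {α : Type*} [DecidableEq α] (𝓗 : Finset (Finset α)) (G : Finset α) : Prop :=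
  ∃ S ⊆ 𝓗, S.Nonempty ∧ S.sup id = G

lemma aux_sum_nonempty {α : Type*} [DecidableEq α] (T : Finset α) :
    (∑ S ∈ T.powerset.filter (fun S => S.Nonempty), (-1 : ℝ) ^ (S.card + 1))
      = if T.Nonempty then 1 else 0 := by
  have h0 : (∑ S ∈ T.powerset, (-1 : ℝ) ^ S.card) = if T = ∅ then 1 else 0 := by
    have h := Finset.sum_powerset_neg_one_pow_card (x := T)
    calc (∑ S ∈ T.powerset, (-1 : ℝ) ^ S.card)
        = ((∑ S ∈ T.powerset, (-1 : ℤ) ^ S.card : ℤ) : ℝ) := by push_cast; ring_nf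
      _ = _ := by rw [h]; split <;> simp
  have hsplit : T.powerset.filter (fun S => S.Nonempty)
      = T.powerset.erase ∅ := by
    ext S
    simp [Finset.nonempty_iff_ne_empty, and_comm]
  rw [hsplit]
  have hmem : (∅ : Finset α) ∈ T.powerset := by simp
  have := Finset.add_sum_erase _ (fun S => (-1 : ℝ) ^ S.card) hmem
  have hsum : (∑ S ∈ T.powerset.erase ∅, (-1 : ℝ) ^ S.card)
      = (if T = ∅ then 1 else 0) - 1 := by
    rw [← h0, ← this]; simp
  calc (∑ S ∈ T.powerset.erase ∅, (-1 : ℝ) ^ (S.card + 1))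
      = -∑ S ∈ T.powerset.erase ∅, (-1 : ℝ) ^ S.card := by
        rw [← Finset.sum_neg_distrib]
        exact Finset.sum_congr rfl fun S _ => by ring
    _ = if T.Nonempty then 1 else 0 := by
        rw [hsum]
        by_cases h : T = ∅ <;>
          simp [h, Finset.nonempty_iff_ne_empty]

/-- the real multilinear polynomial of the graph cover function `f_𝓗` has its
monomials supported on `𝓗`-covered graphs, with the coefficient of the monomial of `G` equal
to `∑_{∅ ≠ S ⊆ 𝓗, ∪S = G} (−1)^{|S|+1}`. -/
theorem stmt2 (n m : ℕ) (𝓗 : Finset (Finset (Fin n × Fin m))) :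
    -- the explicit coefficients represent the graph cover function f_𝓗
    (∀ x : Fin n × Fin m → Bool,
      (∑ G : Finset (Fin n × Fin m),
        (∑ S ∈ 𝓗.powerset.filter (fun S => S.Nonempty ∧ S.sup id = G),
          (-1 : ℝ) ^ (S.card + 1)) * ∏ e ∈ G, (if x e then (1 : ℝ) else 0))
        = (if ∃ H ∈ 𝓗, ∀ e ∈ H, x e = true then 1 else 0)) ∧
    -- every monomial with nonzero coefficient corresponds to an 𝓗-covered graph
    (∀ G : Finset (Fin n × Fin m),
      (∑ S ∈ 𝓗.powerset.filter (fun S => S.Nonempty ∧ S.sup id = G),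
        (-1 : ℝ) ^ (S.card + 1)) ≠ 0 → covered 𝓗 G) := by
  constructor
  · intro x
    have hprod : ∀ G : Finset (Fin n × Fin m),
        (∏ e ∈ G, (if x e then (1 : ℝ) else 0))
          = if ∀ e ∈ G, x e = true then 1 else 0 := by
      intro G
      split_ifs with h
      · exact Finset.prod_eq_one fun e he => by simp [h e he]
      · push_neg at h
        obtain ⟨e, he, hne⟩ := h
        exact Finset.prod_eq_zero he (by simp [hne])
    simp_rw [hprod, Finset.sum_mul]
    have hfil : ∀ G : Finset (Fin n × Fin m),
        𝓗.powerset.filter (fun S => S.Nonempty ∧ S.sup id = G)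
          = (𝓗.powerset.filter (fun S => S.Nonempty)).filter (fun S => S.sup id = G) := by
      intro G; rw [Finset.filter_filter]
    have hstep : ∀ G : Finset (Fin n × Fin m),
        (∑ S ∈ 𝓗.powerset.filter (fun S => S.Nonempty ∧ S.sup id = G),
          (-1 : ℝ) ^ (S.card + 1) * (if ∀ e ∈ G, x e = true then 1 else 0))
        = (∑ S ∈ (𝓗.powerset.filter (fun S => S.Nonempty)).filter
              (fun S => S.sup id = G),
            (-1 : ℝ) ^ (S.card + 1) * (if ∀ e ∈ S.sup id, x e = true then 1 else 0)) := by
      intro G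
      rw [hfil G]
      refine Finset.sum_congr rfl fun S hS => ?_
      rw [(Finset.mem_filter.mp hS).2]
    simp_rw [hstep]
    rw [Finset.sum_fiberwise (𝓗.powerset.filter (fun S => S.Nonempty)) (fun S => S.sup id)
      (fun S => (-1 : ℝ) ^ (S.card + 1) * (if ∀ e ∈ S.sup id, x e = true then 1 else 0))]
    -- now a single sum over nonempty subfamilies
    set 𝓗' : Finset (Finset (Fin n × Fin m)) := 𝓗.filter (fun H => ∀ e ∈ H, x e = true)
      with h𝓗'
    have hsub : 𝓗'.powerset.filter (fun S => S.Nonempty)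
        ⊆ 𝓗.powerset.filter (fun S => S.Nonempty) := by
      intro S hS
      simp only [Finset.mem_filter, Finset.mem_powerset] at hS ⊢
      exact ⟨hS.1.trans (Finset.filter_subset _ _), hS.2⟩
    rw [← Finset.sum_subset hsub (by
      intro S hS hS'
      simp only [Finset.mem_filter, Finset.mem_powerset] at hS hS'
      have : ¬ (S ⊆ 𝓗') := fun h => hS' ⟨h, hS.2⟩
      have hex : ∃ H ∈ S, ¬ ∀ e ∈ H, x e = true := by
        by_contra hc
        push_neg at hc
        exact this fun H hH => Finset.mem_filter.mpr ⟨hS.1 hH, hc H hH⟩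
      obtain ⟨H, hHS, hH⟩ := hex
      have : ¬ ∀ e ∈ S.sup id, x e = true := by
        intro hall
        exact hH fun e he => hall e (Finset.mem_sup.mpr ⟨H, hHS, he⟩)
      rw [if_neg this, mul_zero])]
    have hmem : ∀ S ∈ 𝓗'.powerset.filter (fun S => S.Nonempty),
        (∀ e ∈ S.sup id, x e = true) := by
      intro S hS
      simp only [Finset.mem_filter, Finset.mem_powerset] at hS
      intro e he
      obtain ⟨H, hHS, heH⟩ := Finset.mem_sup.mp he
      exact (Finset.mem_filter.mp (hS.1 hHS)).2 e heH
    rw [Finset.sum_congr rfl (fun S hS => by rw [if_pos (hmem S hS), mul_one])]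
    rw [aux_sum_nonempty]
    congr 1
    simp only [h𝓗', Finset.filter_nonempty_iff]
  · intro G h
    obtain ⟨S, hS, -⟩ := Finset.exists_ne_zero_of_sum_ne_zero h
    simp only [Finset.mem_filter, Finset.mem_powerset] at hS
    exact ⟨S, hS.1, hS.2.1, hS.2.2⟩
end

section
/- Let H be a set of bipartite graphs over the vertices of K_{n,m} and let P be the lattice consisting of all H-covered graphs together with the empty graph 0̂, ordered by inclusion. Then f_H(x) = Σ_{G H-covered} (−μ_P(0̂, G)) · Π_{(i,j)∈E(G)} x_{i,j}; that is, the coefficients of the multilinear polynomial representing f_H are the negated Möbius numbers of P. -/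
open Finset
open scoped Classical

/-- if `μ0` is the Möbius number function of the lattice `P` of `𝓗`-covered
graphs together with the empty graph `0̂` (characterized by `μ0 0̂ = 1` and, for every
`𝓗`-covered `G`, `∑_{0̂ ≤ G' ≤ G} μ0 G' = 0`), then the graph cover function `f_𝓗` is
represented by the multilinear polynomial whose coefficient on each `𝓗`-covered `G` is
`−μ0 G` (and `0` on non-covered graphs). -/
theorem stmt3 (n m : ℕ) (𝓗 : Finset (Finset (Fin n × Fin m)))
    (μ0 : Finset (Fin n × Fin m) → ℝ)
    (hbot : μ0 ∅ = 1)
    (hrec : ∀ G : Finset (Fin n × Fin m), covered 𝓗 G →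
      μ0 ∅ + ∑ G' ∈ G.powerset.filter (covered 𝓗), μ0 G' = 0) :
    ∀ x : Fin n × Fin m → Bool,
      (∑ G : Finset (Fin n × Fin m),
        (if covered 𝓗 G then -μ0 G else 0) * ∏ e ∈ G, (if x e then (1 : ℝ) else 0))
        = (if ∃ H ∈ 𝓗, ∀ e ∈ H, x e = true then 1 else 0) := by
  intro x
  classical
  set T : Finset (Fin n × Fin m) := Finset.univ.filter (fun e => x e = true) with hT
  have hTmem : ∀ G : Finset (Fin n × Fin m), (∀ e ∈ G, x e = true) ↔ G ⊆ T := by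
    intro G; simp [hT, Finset.subset_iff]
  have key : ∀ G : Finset (Fin n × Fin m),
      (if covered 𝓗 G then -μ0 G else 0) * ∏ e ∈ G, (if x e then (1:ℝ) else 0)
      = if covered 𝓗 G ∧ G ⊆ T then -μ0 G else 0 := by
    intro G
    rw [Finset.prod_boole]
    simp only [hTmem]
    by_cases h1 : covered 𝓗 G <;> by_cases h2 : G ⊆ T <;> simp [h1, h2]
  simp_rw [key]
  rw [← Finset.sum_filter]
  by_cases hx : ∃ H ∈ 𝓗, ∀ e ∈ H, x e = true
  · obtain ⟨H0, hH0, hH0T⟩ := hx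
    have hH0T' : H0 ⊆ T := (hTmem H0).1 hH0T
    set S : Finset (Finset (Fin n × Fin m)) := 𝓗.filter (· ⊆ T) with hS
    set Gs : Finset (Fin n × Fin m) := S.sup id with hGs
    have hcov : covered 𝓗 Gs :=
      ⟨S, Finset.filter_subset _ _, ⟨H0, by simp [hS, hH0, hH0T']⟩, rfl⟩
    have hGsT : Gs ⊆ T := by
      have : Gs ≤ T := Finset.sup_le fun H hH => (Finset.mem_filter.1 hH).2
      exact this
    have hsets : Finset.univ.filter (fun G => covered 𝓗 G ∧ G ⊆ T)
        = Gs.powerset.filter (covered 𝓗) := by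
      ext G
      simp only [Finset.mem_filter, Finset.mem_univ, true_and, Finset.mem_powerset]
      constructor
      · rintro ⟨⟨S', hS'H, hS'ne, rfl⟩, hGT⟩
        refine ⟨Finset.sup_le fun H hH => ?_, ⟨S', hS'H, hS'ne, rfl⟩⟩
        have : H ⊆ T := (Finset.le_sup (f := id) hH).trans hGT
        exact Finset.le_sup (f := id) (Finset.mem_filter.2 ⟨hS'H hH, this⟩)
      · rintro ⟨hGGs, hc⟩
        exact ⟨hc, hGGs.trans hGsT⟩
    rw [hsets, Finset.sum_neg_distrib]
    have := hrec Gs hcov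
    rw [hbot] at this
    rw [if_pos ⟨H0, hH0, hH0T⟩]
    linarith
  · rw [if_neg hx]
    have hsets : Finset.univ.filter (fun G => covered 𝓗 G ∧ G ⊆ T) = ∅ := by
      ext G
      simp only [Finset.mem_filter, Finset.mem_univ, true_and, Finset.notMem_empty,
        iff_false]
      rintro ⟨⟨S', hS'H, ⟨H, hH⟩, rfl⟩, hGT⟩
      exact hx ⟨H, hS'H hH, (hTmem H).2 ((Finset.le_sup (f := id) hH).trans hGT)⟩
    rw [hsets, Finset.sum_empty]
end

section
/- For n > 1, the number of elementary (connected matching-covered) balanced bipartite graphs on vertex classes of size n each is at least 2^{n²}·(1 − 2n⁴/2ⁿ). In particular, the proportion of subgraphs of K_{n,n} that are matching-covered tends to 1 as n → ∞. -/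
open Finset
open scoped Classical

/-- Edges of the complete bipartite graph `K_{n,n}` on labeled parts of size `n`. -/
abbrev Edge (n : ℕ) := Fin n × Fin n

/-- `M` is (the edge set of) a perfect matching of `K_{n,n}`. -/
def isPM {n : ℕ} (M : Finset (Edge n)) : Prop :=
  ∃ σ : Equiv.Perm (Fin n), M = Finset.univ.image fun i => (i, σ i)

/-- `G` is matching-covered: its edge set is a (nonempty) union of perfect matchings. -/
def matchingCovered {n : ℕ} (G : Finset (Edge n)) : Prop :=
  ∃ S : Finset (Finset (Edge n)), S.Nonempty ∧ (∀ M ∈ S, isPM M) ∧ S.sup id = G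

/-- `G` contains a perfect matching. -/
def hasPM {n : ℕ} (G : Finset (Edge n)) : Prop :=
  ∃ σ : Equiv.Perm (Fin n), ∀ i, (i, σ i) ∈ G

/-- The bipartite graph on the vertex set `Fin n ⊕ Fin n` with edge set `G`. -/
def graphOn {n : ℕ} (G : Finset (Edge n)) : SimpleGraph (Fin n ⊕ Fin n) :=
  SimpleGraph.fromRel fun u v => ∃ e ∈ G, u = Sum.inl e.1 ∧ v = Sum.inr e.2

/-- The number of connected components of `G` (as a spanning subgraph of `K_{n,n}`). -/
noncomputable def numComponents {n : ℕ} (G : Finset (Edge n)) : ℕ :=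
  Nat.card (graphOn G).ConnectedComponent

/-- The cyclomatic number `χ(G) = |E(G)| − |V(G)| + |C(G)|`. -/
noncomputable def cyclo {n : ℕ} (G : Finset (Edge n)) : ℤ :=
  (G.card : ℤ) + numComponents G - 2 * n

/-- `G` is elementary: a connected matching-covered graph. -/
def elementary {n : ℕ} (G : Finset (Edge n)) : Prop :=
  matchingCovered G ∧ (graphOn G).Connected

/-- The bipartite perfect matching decision function, on inputs `x : Edge n → Bool`. -/
def BPMb (n : ℕ) (x : Edge n → Bool) : Prop :=
  ∃ σ : Equiv.Perm (Fin n), ∀ i, x (i, σ i) = true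

/-- neighborhood of `S` on the left side -/
def nbr {n : ℕ} (G : Finset (Edge n)) (S : Finset (Fin n)) : Finset (Fin n) :=
  S.biUnion fun a => Finset.univ.filter fun b => (a, b) ∈ G

def Good {n : ℕ} (G : Finset (Edge n)) : Prop :=
  (∀ S : Finset (Fin n), S.Nonempty → S ≠ Finset.univ → S.card + 1 ≤ (nbr G S).card) ∧
  (∀ b : Fin n, ∃ a, (a, b) ∈ G)

variable {n : ℕ}

lemma nbr_mem {G : Finset (Edge n)} {S : Finset (Fin n)} {b : Fin n} :
    b ∈ nbr G S ↔ ∃ a ∈ S, (a, b) ∈ G := by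
  simp [nbr]

lemma good_pm_through {G : Finset (Edge n)} (hG : Good G) {a b : Fin n}
    (hab : (a, b) ∈ G) :
    ∃ σ : Equiv.Perm (Fin n), (∀ i, (i, σ i) ∈ G) ∧ σ a = b := by
  classical
  set t : Fin n → Finset (Fin n) :=
    fun x => if x = a then {b} else (Finset.univ.filter fun y => (x, y) ∈ G) \ {b} with ht
  -- auxiliary: Hall condition for sets avoiding a
  have aux : ∀ s : Finset (Fin n), a ∉ s → s.card ≤ (s.biUnion t).card := by
    intro s hs
    rcases s.eq_empty_or_nonempty with rfl | hne
    · simp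
    have hsu : s ≠ Finset.univ := fun h => hs (h ▸ Finset.mem_univ a)
    have h1 : s.card + 1 ≤ (nbr G s).card := hG.1 s hne hsu
    have h2 : s.biUnion t = (nbr G s) \ {b} := by
      ext y
      simp only [Finset.mem_biUnion, Finset.mem_sdiff, nbr_mem, Finset.mem_singleton]
      constructor
      · rintro ⟨x, hx, hy⟩
        have hxa : x ≠ a := fun h => hs (h ▸ hx)
        rw [ht] at hy
        simp only [if_neg hxa, Finset.mem_sdiff, Finset.mem_filter, Finset.mem_univ,
          true_and, Finset.mem_singleton] at hy
        exact ⟨⟨x, hx, hy.1⟩, hy.2⟩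
      · rintro ⟨⟨x, hx, hxy⟩, hyb⟩
        have hxa : x ≠ a := fun h => hs (h ▸ hx)
        refine ⟨x, hx, ?_⟩
        rw [ht]
        simp only [if_neg hxa, Finset.mem_sdiff, Finset.mem_filter, Finset.mem_univ,
          true_and, Finset.mem_singleton]
        exact ⟨hxy, hyb⟩
    have h3 : (nbr G s).card ≤ ((nbr G s) \ {b}).card + 1 := by
      have := Finset.card_le_card_sdiff_add_card (s := nbr G s) (t := {b})
      simpa using this
    rw [h2]
    omega
  have hall : ∀ s : Finset (Fin n), s.card ≤ (s.biUnion t).card := by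
    intro s
    by_cases has : a ∈ s
    · have hs' : s = insert a (s.erase a) := (Finset.insert_erase has).symm
      have hbu : s.biUnion t = insert b ((s.erase a).biUnion t) := by
        conv_lhs => rw [hs']
        rw [Finset.biUnion_insert]
        have : t a = {b} := by simp [ht]
        rw [this]
        ext y; simp [Finset.mem_union, Finset.mem_insert]
      have hbnot : b ∉ (s.erase a).biUnion t := by
        intro hb
        rcases Finset.mem_biUnion.mp hb with ⟨x, hx, hy⟩
        have hxa : x ≠ a := Finset.ne_of_mem_erase hx
        rw [ht] at hy
        simp [if_neg hxa] at hy
      have hcard : (s.biUnion t).card = ((s.erase a).biUnion t).card + 1 := by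
        rw [hbu, Finset.card_insert_of_notMem hbnot]
      have haux := aux (s.erase a) (Finset.notMem_erase a s)
      have : s.card = (s.erase a).card + 1 := by
        rw [Finset.card_erase_of_mem has]
        have : 1 ≤ s.card := Finset.card_pos.mpr ⟨a, has⟩
        omega
      omega
    · exact aux s has
  obtain ⟨f, hfinj, hf⟩ :=
    (Finset.all_card_le_biUnion_card_iff_exists_injective t).mp hall
  have hfa : f a = b := by
    have := hf a
    rw [ht] at this
    simpa using this
  have hbij : Function.Bijective f := Finite.injective_iff_bijective.mp hfinj
  refine ⟨Equiv.ofBijective f hbij, fun i => ?_, hfa⟩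
  show (i, f i) ∈ G
  by_cases hia : i = a
  · subst hia; rw [hfa]; exact hab
  · have := hf i
    rw [ht] at this
    simp only [if_neg hia, Finset.mem_sdiff, Finset.mem_filter, Finset.mem_univ,
      true_and] at this
    exact this.1

lemma good_pm {G : Finset (Edge n)} (hn : 0 < n) (hG : Good G) :
    ∃ σ : Equiv.Perm (Fin n), ∀ i, (i, σ i) ∈ G := by
  obtain ⟨a, ha⟩ := hG.2 ⟨0, hn⟩
  obtain ⟨σ, hσ, -⟩ := good_pm_through hG ha
  exact ⟨σ, hσ⟩

lemma good_mc {G : Finset (Edge n)} (hn : 0 < n) (hG : Good G) :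
    matchingCovered G := by
  classical
  have hex : ∀ e : Edge n, e ∈ G → ∃ M : Finset (Edge n), isPM M ∧ e ∈ M ∧ M ⊆ G := by
    rintro ⟨a, b⟩ he
    obtain ⟨σ, hσ, hσa⟩ := good_pm_through hG he
    refine ⟨Finset.univ.image fun i => (i, σ i), ⟨σ, rfl⟩, ?_, ?_⟩
    · exact Finset.mem_image.mpr ⟨a, Finset.mem_univ a, by rw [hσa]⟩
    · intro e' he'
      rcases Finset.mem_image.mp he' with ⟨i, -, rfl⟩
      exact hσ i
  choose! F hF1 hF2 hF3 using hex
  have hGne : G.Nonempty := by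
    obtain ⟨a, ha⟩ := hG.2 ⟨0, hn⟩
    exact ⟨(a, ⟨0, hn⟩), ha⟩
  refine ⟨G.image F, hGne.image F, ?_, ?_⟩
  · intro M hM
    rcases Finset.mem_image.mp hM with ⟨e, he, rfl⟩
    exact hF1 e he
  · apply le_antisymm
    · apply Finset.sup_le
      intro M hM
      rcases Finset.mem_image.mp hM with ⟨e, he, rfl⟩
      exact hF3 e he
    · intro e he
      have : F e ∈ G.image F := Finset.mem_image_of_mem F he
      exact Finset.mem_sup.mpr ⟨F e, this, hF2 e he⟩

lemma graphOn_adj {G : Finset (Edge n)} {a b : Fin n} :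
    (graphOn G).Adj (Sum.inl a) (Sum.inr b) ↔ (a, b) ∈ G := by
  simp only [graphOn, SimpleGraph.fromRel_adj]
  constructor
  · rintro ⟨-, ⟨e, he, h1, h2⟩ | ⟨e, he, h1, h2⟩⟩
    · obtain rfl : a = e.1 := Sum.inl.inj h1
      obtain rfl : b = e.2 := Sum.inr.inj h2
      exact he
    · exact absurd h1 (by simp)
  · intro h
    exact ⟨by simp, Or.inl ⟨(a, b), h, rfl, rfl⟩⟩

lemma good_conn {G : Finset (Edge n)} (hn : 0 < n) (hG : Good G) :
    (graphOn G).Connected := by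
  classical
  obtain ⟨σ, hσ⟩ := good_pm hn hG
  set a₀ : Fin n := ⟨0, hn⟩
  set c₀ := (graphOn G).connectedComponentMk (Sum.inl a₀) with hc₀
  set S := Finset.univ.filter
    (fun a => (graphOn G).connectedComponentMk (Sum.inl a) = c₀) with hS
  set T := Finset.univ.filter
    (fun b => (graphOn G).connectedComponentMk (Sum.inr b) = c₀) with hT
  have hedge : ∀ {a b : Fin n}, (a, b) ∈ G →
      (graphOn G).connectedComponentMk (Sum.inl a)
        = (graphOn G).connectedComponentMk (Sum.inr b) := by
    intro a b hab
    exact SimpleGraph.ConnectedComponent.sound (graphOn_adj.mpr hab).reachable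
  have hnbrT : nbr G S ⊆ T := by
    intro b hb
    rcases nbr_mem.mp hb with ⟨a, ha, hab⟩
    have := (Finset.mem_filter.mp ha).2
    exact Finset.mem_filter.mpr ⟨Finset.mem_univ b, by rw [← hedge hab, this]⟩
  have hTS : ∀ b ∈ T, σ.symm b ∈ S := by
    intro b hb
    have hedge' : (σ.symm b, b) ∈ G := by
      have := hσ (σ.symm b)
      rwa [Equiv.apply_symm_apply] at this
    have := (Finset.mem_filter.mp hb).2
    exact Finset.mem_filter.mpr ⟨Finset.mem_univ _, by rw [hedge hedge', this]⟩
  have hTcard : T.card ≤ S.card :=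
    Finset.card_le_card_of_injOn (fun b => σ.symm b) hTS
      (σ.symm.injective.injOn)
  have hSuniv : S = Finset.univ := by
    by_contra hne
    have hSne : S.Nonempty := ⟨a₀, Finset.mem_filter.mpr ⟨Finset.mem_univ _, rfl⟩⟩
    have h1 := hG.1 S hSne hne
    have h2 : (nbr G S).card ≤ T.card := Finset.card_le_card hnbrT
    omega
  have hallc : ∀ v : Fin n ⊕ Fin n, (graphOn G).connectedComponentMk v = c₀ := by
    intro v
    rcases v with a | b
    · have : a ∈ S := hSuniv ▸ Finset.mem_univ a
      exact (Finset.mem_filter.mp this).2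
    · obtain ⟨a, hab⟩ := hG.2 b
      have ha : a ∈ S := hSuniv ▸ Finset.mem_univ a
      rw [← hedge hab]
      exact (Finset.mem_filter.mp ha).2
  have : Nonempty (Fin n ⊕ Fin n) := ⟨Sum.inl a₀⟩
  refine ⟨fun u v => ?_⟩
  have : (graphOn G).connectedComponentMk u = (graphOn G).connectedComponentMk v := by
    rw [hallc u, hallc v]
  exact (SimpleGraph.ConnectedComponent.eq).mp this

lemma good_elem {G : Finset (Edge n)} (hn : 0 < n) (hG : Good G) :
    elementary G :=
  ⟨good_mc hn hG, good_conn hn hG⟩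

lemma shuffle {M K m a c : ℕ} (hK : K ≤ M) (hm : m ≤ M) (h : a * 2 ^ m ≤ c * 2 ^ K) :
    a * 2 ^ (M - K) ≤ c * 2 ^ (M - m) := by
  have p1 : (2:ℕ) ^ (M - K) * 2 ^ K = 2 ^ M := by rw [← pow_add]; congr 1; omega
  have p2 : (2:ℕ) ^ (M - m) * 2 ^ m = 2 ^ M := by rw [← pow_add]; congr 1; omega
  have key : a * 2 ^ m * 2 ^ M ≤ c * 2 ^ K * 2 ^ M := Nat.mul_le_mul_right _ h
  have l : a * 2 ^ (M - K) * (2 ^ K * 2 ^ m) = a * 2 ^ m * 2 ^ M := by rw [← p1]; ring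
  have r : c * 2 ^ (M - m) * (2 ^ K * 2 ^ m) = c * 2 ^ K * 2 ^ M := by rw [← p2]; ring
  have : a * 2 ^ (M - K) * (2 ^ K * 2 ^ m) ≤ c * 2 ^ (M - m) * (2 ^ K * 2 ^ m) := by
    rw [l, r]; exact key
  exact Nat.le_of_mul_le_mul_right this (by positivity)

lemma sq_le_pow (hn : 18 ≤ n) : n ^ 2 ≤ 2 ^ (n - 3) := by
  induction n, hn using Nat.le_induction with
  | base => norm_num
  | succ m hm ih =>
    have h1 : (m + 1) ^ 2 ≤ 2 * m ^ 2 := by nlinarith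
    have h2 : (2:ℕ) ^ (m + 1 - 3) = 2 * 2 ^ (m - 3) := by
      rw [show m + 1 - 3 = (m - 3) + 1 by omega, pow_succ]; ring
    calc (m + 1) ^ 2 ≤ 2 * m ^ 2 := h1
      _ ≤ 2 * 2 ^ (m - 3) := by omega
      _ = 2 ^ (m + 1 - 3) := h2.symm

lemma qu_le_pow (hn : 18 ≤ n) : n ^ 4 ≤ 2 ^ (n - 1) := by
  induction n, hn using Nat.le_induction with
  | base => norm_num
  | succ m hm ih =>
    have h1 : (m + 1) ^ 4 ≤ 2 * m ^ 4 := by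
      have b1 : 18 * m ^ 3 ≤ m * m ^ 3 := Nat.mul_le_mul_right _ hm
      have b2 : 18 * m ^ 2 ≤ m * m ^ 2 := Nat.mul_le_mul_right _ hm
      have b3 : 18 * m ≤ m * m := Nat.mul_le_mul_right _ hm
      have c1 : m * m ^ 3 = m ^ 4 := by ring
      have c2 : m * m ^ 2 = m ^ 3 := by ring
      have c3 : m * m ≤ m ^ 3 := by nlinarith
      nlinarith
    have h2 : (2:ℕ) ^ (m + 1 - 1) = 2 * 2 ^ (m - 1) := by
      rw [show m + 1 - 1 = (m - 1) + 1 by omega, pow_succ]; ring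
    calc (m + 1) ^ 4 ≤ 2 * m ^ 4 := h1
      _ ≤ 2 * 2 ^ (m - 1) := by omega
      _ = 2 ^ (m + 1 - 1) := h2.symm

lemma choose_le_two_pow' {k : ℕ} (h : k ≤ n) : n.choose k ≤ 2 ^ n := by
  calc n.choose k ≤ ∑ i ∈ Finset.range (n + 1), n.choose i :=
        Finset.single_le_sum (fun i _ => Nat.zero_le _) (Finset.mem_range.mpr (by omega))
    _ = 2 ^ n := Nat.sum_range_choose n

lemma key_k (hn : 18 ≤ n) {k : ℕ} (hk1 : 1 ≤ k) (hk2 : k ≤ n - 1) :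
    (n.choose k) ^ 2 * 2 ^ n ≤ 2 * n ^ 2 * 2 ^ (k * (n - k)) := by
  have hn0 : 0 < n := by omega
  have e2n : (2:ℕ) ^ n = 2 * 2 ^ (n - 1) := by
    have : (2:ℕ) ^ n = 2 ^ ((n - 1) + 1) := by congr 1; omega
    rw [this, pow_succ]; ring
  rcases eq_or_ne k 1 with rfl | hk1'
  · rw [Nat.choose_one_right, e2n, one_mul]
    exact le_of_eq (by ring)
  rcases eq_or_ne k (n - 1) with rfl | hkn1'
  · have hch : n.choose (n - 1) = n := by
      have := Nat.choose_symm (Nat.sub_le n 1)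
      rw [show n - (n - 1) = 1 by omega, Nat.choose_one_right] at this
      omega
    rw [hch, show n - (n - 1) = 1 by omega, mul_one, e2n]
    exact le_of_eq (by ring)
  -- now 2 ≤ k ≤ n - 2
  have hsym : ∀ j : ℕ, j ≤ n → n.choose (n - j) = n.choose j := by
    intro j hj; exact Nat.choose_symm hj
  have main2 : ∀ c : ℕ, c ≤ n ^ 2 → c ^ 2 * 2 ^ n ≤ 2 * n ^ 2 * 2 ^ (2 * n - 4) := by
    intro c hc
    have h1 : c ^ 2 ≤ n ^ 2 * n ^ 2 := by nlinarith
    have h2 : n ^ 2 * n ^ 2 * 2 ^ n ≤ n ^ 2 * 2 ^ (n - 3) * 2 ^ n :=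
      Nat.mul_le_mul_right _ (Nat.mul_le_mul_left _ (sq_le_pow hn))
    have h3 : n ^ 2 * 2 ^ (n - 3) * 2 ^ n = n ^ 2 * 2 ^ (2 * n - 3) := by
      rw [mul_assoc, ← pow_add, show n - 3 + n = 2 * n - 3 by omega]
    have h4 : (2:ℕ) ^ (2 * n - 3) = 2 * 2 ^ (2 * n - 4) := by
      rw [show 2 * n - 3 = (2 * n - 4) + 1 by omega, pow_succ]; ring
    calc c ^ 2 * 2 ^ n ≤ n ^ 2 * n ^ 2 * 2 ^ n := Nat.mul_le_mul_right _ h1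
      _ ≤ n ^ 2 * 2 ^ (n - 3) * 2 ^ n := h2
      _ = n ^ 2 * (2 * 2 ^ (2 * n - 4)) := by rw [h3, h4]
      _ = 2 * n ^ 2 * 2 ^ (2 * n - 4) := by ring
  have main3 : ∀ c : ℕ, c ≤ n ^ 3 → c ^ 2 * 2 ^ n ≤ 2 * n ^ 2 * 2 ^ (3 * n - 9) := by
    intro c hc
    have h1 : c ^ 2 ≤ n ^ 2 * n ^ 4 := by nlinarith
    have h2 : n ^ 2 * n ^ 4 * 2 ^ n ≤ n ^ 2 * 2 ^ (n - 1) * 2 ^ n :=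
      Nat.mul_le_mul_right _ (Nat.mul_le_mul_left _ (qu_le_pow hn))
    have h3 : n ^ 2 * 2 ^ (n - 1) * 2 ^ n = n ^ 2 * 2 ^ (2 * n - 1) := by
      rw [mul_assoc, ← pow_add, show n - 1 + n = 2 * n - 1 by omega]
    have h4 : (2:ℕ) ^ (2 * n - 1) ≤ 2 * 2 ^ (3 * n - 9) := by
      calc (2:ℕ) ^ (2 * n - 1) ≤ 2 ^ (3 * n - 9) := Nat.pow_le_pow_right (by norm_num) (by omega)
        _ ≤ 2 * 2 ^ (3 * n - 9) := by omega
    calc c ^ 2 * 2 ^ n ≤ n ^ 2 * n ^ 4 * 2 ^ n := Nat.mul_le_mul_right _ h1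
      _ ≤ n ^ 2 * 2 ^ (2 * n - 1) := by rw [← h3]; exact h2
      _ ≤ n ^ 2 * (2 * 2 ^ (3 * n - 9)) := Nat.mul_le_mul_left _ h4
      _ = 2 * n ^ 2 * 2 ^ (3 * n - 9) := by ring
  rcases eq_or_ne k 2 with rfl | hk2'
  · have := main2 (n.choose 2) (Nat.choose_le_pow n 2)
    rwa [show 2 * n - 4 = 2 * (n - 2) by omega] at this
  rcases eq_or_ne k (n - 2) with rfl | hkn2'
  · have hch : n.choose 2 = n.choose (n - 2) := by
      have := Nat.choose_symm (show n - 2 ≤ n by omega)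
      rwa [show n - (n - 2) = 2 by omega] at this
    have := main2 (n.choose (n - 2)) (hch ▸ Nat.choose_le_pow n 2)
    rw [show n - (n - 2) = 2 by omega]
    rwa [show 2 * n - 4 = (n - 2) * 2 by omega] at this
  rcases eq_or_ne k 3 with rfl | hk3'
  · have := main3 (n.choose 3) (Nat.choose_le_pow n 3)
    rwa [show 3 * n - 9 = 3 * (n - 3) by omega] at this
  rcases eq_or_ne k (n - 3) with rfl | hkn3'
  · have hch : n.choose 3 = n.choose (n - 3) := by
      have := Nat.choose_symm (show n - 3 ≤ n by omega)
      rwa [show n - (n - 3) = 3 by omega] at this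
    have := main3 (n.choose (n - 3)) (hch ▸ Nat.choose_le_pow n 3)
    rw [show n - (n - 3) = 3 by omega]
    rwa [show 3 * n - 9 = (n - 3) * 3 by omega] at this
  -- middle range: 4 ≤ k ≤ n - 4
  have hk4 : 4 ≤ k := by omega
  have hk4' : k ≤ n - 4 := by omega
  have hexp : 3 * n ≤ k * (n - k) := by
    obtain ⟨m, hmm⟩ : ∃ m, n = k + m := ⟨n - k, by omega⟩
    have hnk : n - k = m := by omega
    rw [hnk, hmm]
    have hm4 : 4 ≤ m := by omega
    obtain ⟨a, rfl⟩ : ∃ a, k = a + 4 := ⟨k - 4, by omega⟩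
    obtain ⟨b, rfl⟩ : ∃ b, m = b + 4 := ⟨m - 4, by omega⟩
    have hab : 10 ≤ a + b := by omega
    nlinarith
  have hch : n.choose k ≤ 2 ^ n := choose_le_two_pow' (by omega)
  calc (n.choose k) ^ 2 * 2 ^ n
      ≤ (2 ^ n) ^ 2 * 2 ^ n := Nat.mul_le_mul_right _ (Nat.pow_le_pow_left hch 2)
    _ = 2 ^ (3 * n) := by rw [← pow_mul, ← pow_add]; congr 1; ring
    _ ≤ 2 ^ (k * (n - k)) := Nat.pow_le_pow_right (by norm_num) hexp
    _ ≤ 2 * n ^ 2 * 2 ^ (k * (n - k)) :=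
        Nat.le_mul_of_pos_left _ (by positivity)

noncomputable def evA {n : ℕ} (p : Finset (Fin n) × Finset (Fin n)) :
    Finset (Finset (Edge n)) :=
  Finset.univ.filter fun G => G ⊆ (p.1 ×ˢ p.2ᶜ)ᶜ

noncomputable def evB {n : ℕ} (b : Fin n) : Finset (Finset (Edge n)) :=
  Finset.univ.filter fun G => G ⊆ (Finset.univ ×ˢ ({b} : Finset (Fin n)))ᶜ

noncomputable def badP (n : ℕ) : Finset (Finset (Fin n) × Finset (Fin n)) :=
  Finset.univ.filter fun p =>
    p.1.Nonempty ∧ p.1 ≠ Finset.univ ∧ p.2.card = p.1.card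

lemma card_event (C : Finset (Edge n)) :
    (Finset.univ.filter fun G : Finset (Edge n) => G ⊆ C).card = 2 ^ C.card := by
  have h : (Finset.univ.filter fun G : Finset (Edge n) => G ⊆ C) = C.powerset := by
    ext G; simp [Finset.mem_powerset]
  rw [h, Finset.card_powerset]

lemma card_edge : Fintype.card (Edge n) = n * n := by
  simp [Fintype.card_prod]

lemma bad_sub :
    (Finset.univ.filter fun G : Finset (Edge n) => ¬ Good G) ⊆
      (badP n).biUnion evA ∪ Finset.univ.biUnion evB := by
  intro G hG
  have hbad := (Finset.mem_filter.mp hG).2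
  rw [Finset.mem_union]
  by_cases hB : ∀ b : Fin n, ∃ a, (a, b) ∈ G
  · left
    have hA : ¬ ∀ S : Finset (Fin n), S.Nonempty → S ≠ Finset.univ →
        S.card + 1 ≤ (nbr G S).card := fun h => hbad ⟨h, hB⟩
    push_neg at hA
    obtain ⟨S, hSne, hSu, hcard⟩ := hA
    obtain ⟨T, hT1, -, hT3⟩ :=
      Finset.exists_subsuperset_card_eq (Finset.subset_univ (nbr G S))
        (by omega) (Finset.card_le_univ S)
    refine Finset.mem_biUnion.mpr ⟨(S, T), ?_, ?_⟩
    · exact Finset.mem_filter.mpr ⟨Finset.mem_univ _, hSne, hSu, hT3⟩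
    · refine Finset.mem_filter.mpr ⟨Finset.mem_univ _, fun e he => ?_⟩
      rw [Finset.mem_compl]
      intro hmem
      rw [Finset.mem_product] at hmem
      have h1 : e.1 ∈ S := hmem.1
      have h2 : e.2 ∉ T := Finset.mem_compl.mp hmem.2
      exact h2 (hT1 (nbr_mem.mpr ⟨e.1, h1, by rwa [Prod.mk.eta]⟩))
  · right
    push_neg at hB
    obtain ⟨b, hb⟩ := hB
    refine Finset.mem_biUnion.mpr ⟨b, Finset.mem_univ b,
      Finset.mem_filter.mpr ⟨Finset.mem_univ _, fun e he => ?_⟩⟩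
    rw [Finset.mem_compl]
    intro hmem
    rw [Finset.mem_product] at hmem
    have : e.2 = b := Finset.mem_singleton.mp hmem.2
    exact hb e.1 (by rw [← this, Prod.mk.eta]; exact he)

lemma cardB_le :
    ((Finset.univ : Finset (Fin n)).biUnion evB).card ≤ n * 2 ^ (n * n - n) := by
  calc ((Finset.univ : Finset (Fin n)).biUnion evB).card
      ≤ ∑ b : Fin n, (evB b).card := Finset.card_biUnion_le
    _ = ∑ _b : Fin n, 2 ^ (n * n - n) := by
        apply Finset.sum_congr rfl
        intro b _
        rw [evB, card_event]
        congr 1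
        rw [Finset.card_compl, card_edge, Finset.card_product, Finset.card_singleton,
          Finset.card_univ, Fintype.card_fin, mul_one]
    _ = n * 2 ^ (n * n - n) := by
        rw [Finset.sum_const, Finset.card_univ, Fintype.card_fin, smul_eq_mul]

lemma cardA_le (hn : 18 ≤ n) :
    ((badP n).biUnion evA).card ≤ (n - 1) * (2 * n ^ 2 * 2 ^ (n * n - n)) := by
  have maps_to : ∀ p ∈ badP n, p.1.card ∈ Finset.Icc 1 (n - 1) := by
    intro p hp
    obtain ⟨-, h1, h2, -⟩ := Finset.mem_filter.mp hp
    refine Finset.mem_Icc.mpr ⟨Finset.card_pos.mpr h1, ?_⟩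
    have : p.1 ⊂ Finset.univ := Finset.ssubset_univ_iff.mpr h2
    have := Finset.card_lt_card this
    rw [Finset.card_univ, Fintype.card_fin] at this
    omega
  have per_p : ∀ p ∈ badP n,
      (evA p).card = 2 ^ (n * n - p.1.card * (n - p.1.card)) := by
    intro p hp
    obtain ⟨-, -, -, hpc⟩ := Finset.mem_filter.mp hp
    rw [evA, card_event]
    congr 1
    rw [Finset.card_compl, card_edge, Finset.card_product, Finset.card_compl,
      Fintype.card_fin, hpc]
  have fiber_card : ∀ k ∈ Finset.Icc 1 (n - 1),
      ((badP n).filter fun p => p.1.card = k).card ≤ n.choose k * n.choose k := by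
    intro k _
    have hsub : ((badP n).filter fun p => p.1.card = k) ⊆
        (Finset.univ.powersetCard k) ×ˢ (Finset.univ.powersetCard k) := by
      intro p hp
      obtain ⟨hp1, hp2⟩ := Finset.mem_filter.mp hp
      obtain ⟨-, -, -, hpc⟩ := Finset.mem_filter.mp hp1
      rw [Finset.mem_product, Finset.mem_powersetCard, Finset.mem_powersetCard]
      exact ⟨⟨Finset.subset_univ _, hp2⟩, ⟨Finset.subset_univ _, by rw [hpc, hp2]⟩⟩
    calc ((badP n).filter fun p => p.1.card = k).card
        ≤ _ := Finset.card_le_card hsub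
      _ = n.choose k * n.choose k := by
          rw [Finset.card_product, Finset.card_powersetCard, Finset.card_univ,
            Fintype.card_fin]
  calc ((badP n).biUnion evA).card
      ≤ ∑ p ∈ badP n, (evA p).card := Finset.card_biUnion_le
    _ = ∑ p ∈ badP n, 2 ^ (n * n - p.1.card * (n - p.1.card)) :=
        Finset.sum_congr rfl per_p
    _ = ∑ k ∈ Finset.Icc 1 (n - 1), ∑ p ∈ (badP n).filter (fun p => p.1.card = k),
          2 ^ (n * n - p.1.card * (n - p.1.card)) :=
        (Finset.sum_fiberwise_of_maps_to maps_to _).symm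
    _ ≤ ∑ k ∈ Finset.Icc 1 (n - 1), 2 * n ^ 2 * 2 ^ (n * n - n) := by
        apply Finset.sum_le_sum
        intro k hk
        obtain ⟨hk1, hk2⟩ := Finset.mem_Icc.mp hk
        have inner : ∑ p ∈ (badP n).filter (fun p => p.1.card = k),
            2 ^ (n * n - p.1.card * (n - p.1.card))
            = ((badP n).filter fun p => p.1.card = k).card * 2 ^ (n * n - k * (n - k)) := by
          rw [Finset.sum_congr rfl
            (fun p hp => by rw [(Finset.mem_filter.mp hp).2] :
              ∀ p ∈ (badP n).filter (fun p => p.1.card = k),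
                (2:ℕ) ^ (n * n - p.1.card * (n - p.1.card)) = 2 ^ (n * n - k * (n - k))),
            Finset.sum_const, smul_eq_mul]
        rw [inner]
        have hKM : k * (n - k) ≤ n * n :=
          Nat.mul_le_mul (by omega) (Nat.sub_le n k |>.trans (le_refl n))
        have hmM : n ≤ n * n := Nat.le_mul_of_pos_left n (by omega)
        calc ((badP n).filter fun p => p.1.card = k).card * 2 ^ (n * n - k * (n - k))
            ≤ (n.choose k * n.choose k) * 2 ^ (n * n - k * (n - k)) :=
              Nat.mul_le_mul_right _ (fiber_card k hk)
          _ = (n.choose k) ^ 2 * 2 ^ (n * n - k * (n - k)) := by ring_nf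
          _ ≤ 2 * n ^ 2 * 2 ^ (n * n - n) :=
              shuffle hKM hmM (key_k hn hk1 hk2)
    _ = (n - 1) * (2 * n ^ 2 * 2 ^ (n * n - n)) := by
        rw [Finset.sum_const, Nat.card_Icc, smul_eq_mul]
        congr 1

lemma bad_card (hn : 18 ≤ n) :
    (Finset.univ.filter fun G : Finset (Edge n) => ¬ Good G).card
      ≤ 2 * n ^ 4 * 2 ^ (n * n - n) := by
  have h1 := Finset.card_le_card (bad_sub (n := n))
  have h2 := Finset.card_union_le ((badP n).biUnion evA)
    ((Finset.univ : Finset (Fin n)).biUnion evB)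
  have h3 := cardA_le hn
  have h4 := cardB_le (n := n)
  have h5 : (n - 1) * (2 * n ^ 2 * 2 ^ (n * n - n)) + n * 2 ^ (n * n - n)
      ≤ 2 * n ^ 4 * 2 ^ (n * n - n) := by
    have hfac : (n - 1) * (2 * n ^ 2) + n ≤ 2 * n ^ 4 := by
      have h6 : (n - 1) * (2 * n ^ 2) ≤ n * (2 * n ^ 2) :=
        Nat.mul_le_mul_right _ (Nat.sub_le n 1)
      have h7 : n * (2 * n ^ 2) + n ≤ 2 * n ^ 4 := by
        have e1 : n * n ^ 3 = n ^ 4 := by ring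
        have e2 : n * n ^ 2 = n ^ 3 := by ring
        have f1 : 18 * n ^ 3 ≤ n * n ^ 3 := Nat.mul_le_mul_right _ hn
        have f2 : 18 * n ≤ n * n := Nat.mul_le_mul_right _ hn
        have g : n * n ≤ n ^ 3 := by nlinarith
        nlinarith
      omega
    calc (n - 1) * (2 * n ^ 2 * 2 ^ (n * n - n)) + n * 2 ^ (n * n - n)
        = ((n - 1) * (2 * n ^ 2) + n) * 2 ^ (n * n - n) := by ring
      _ ≤ 2 * n ^ 4 * 2 ^ (n * n - n) := Nat.mul_le_mul_right _ hfac
  omega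

lemma elem_lower (n : ℕ) (hn : 1 < n) :
    (2 : ℝ) ^ (n ^ 2) * (1 - 2 * (n : ℝ) ^ 4 / 2 ^ n)
      ≤ ((Finset.univ.filter fun G : Finset (Edge n) => elementary G).card : ℝ) := by
  by_cases h18 : 18 ≤ n
  · -- main counting case
    have hn0 : 0 < n := by omega
    have hle : n ≤ n * n := Nat.le_mul_of_pos_left n hn0
    have hGdE : (Finset.univ.filter fun G : Finset (Edge n) => Good G).card
        ≤ (Finset.univ.filter fun G : Finset (Edge n) => elementary G).card := by
      apply Finset.card_le_card
      intro G hG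
      rw [Finset.mem_filter] at hG ⊢
      exact ⟨hG.1, good_elem hn0 hG.2⟩
    have hsum : (Finset.univ.filter fun G : Finset (Edge n) => Good G).card
        + (Finset.univ.filter fun G : Finset (Edge n) => ¬ Good G).card
        = 2 ^ (n * n) := by
      rw [Finset.card_filter_add_card_filter_not, Finset.card_univ,
        Fintype.card_finset, card_edge]
    have hB := bad_card (n := n) h18
    have hpow : (2:ℝ) ^ (n * n - n) * 2 ^ n = 2 ^ (n ^ 2) := by
      rw [← pow_add, Nat.sub_add_cancel hle, pow_two]
    have h2n : (0:ℝ) < 2 ^ n := by positivity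
    have key : (2 : ℝ) ^ (n ^ 2) * (1 - 2 * (n : ℝ) ^ 4 / 2 ^ n)
        = 2 ^ (n ^ 2) - 2 * (n:ℝ) ^ 4 * 2 ^ (n * n - n) := by
      rw [mul_sub, mul_one]
      congr 1
      rw [← hpow]
      field_simp
    rw [key]
    have hcast1 : ((Finset.univ.filter fun G : Finset (Edge n) => ¬ Good G).card : ℝ)
        ≤ 2 * (n:ℝ) ^ 4 * 2 ^ (n * n - n) := by
      calc ((Finset.univ.filter fun G : Finset (Edge n) => ¬ Good G).card : ℝ)
          ≤ ((2 * n ^ 4 * 2 ^ (n * n - n) : ℕ) : ℝ) := Nat.cast_le.mpr hB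
        _ = 2 * (n:ℝ) ^ 4 * 2 ^ (n * n - n) := by push_cast; ring
    have hcast2 : ((Finset.univ.filter fun G : Finset (Edge n) => Good G).card : ℝ)
        + ((Finset.univ.filter fun G : Finset (Edge n) => ¬ Good G).card : ℝ)
        = 2 ^ (n ^ 2) := by
      rw [← Nat.cast_add, hsum]
      push_cast
      rw [pow_two]
    have hcast3 : ((Finset.univ.filter fun G : Finset (Edge n) => Good G).card : ℝ)
        ≤ ((Finset.univ.filter fun G : Finset (Edge n) => elementary G).card : ℝ) :=
      Nat.cast_le.mpr hGdE
    linarith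
  · -- small case : the bound is nonpositive
    push_neg at h18
    have hsmall : (2:ℝ) ^ n ≤ 2 * (n:ℝ) ^ 4 := by
      have : (2:ℕ) ^ n ≤ 2 * n ^ 4 := by
        interval_cases n <;> norm_num
      calc (2:ℝ) ^ n = ((2 ^ n : ℕ) : ℝ) := by push_cast; ring
        _ ≤ ((2 * n ^ 4 : ℕ) : ℝ) := Nat.cast_le.mpr this
        _ = 2 * (n:ℝ) ^ 4 := by push_cast; ring
    have h2n : (0:ℝ) < 2 ^ n := by positivity
    have hfac : (1 - 2 * (n : ℝ) ^ 4 / 2 ^ n) ≤ 0 := by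
      rw [sub_nonpos, le_div_iff₀ h2n, one_mul]
      exact hsmall
    have : (2 : ℝ) ^ (n ^ 2) * (1 - 2 * (n : ℝ) ^ 4 / 2 ^ n) ≤ 0 :=
      mul_nonpos_iff.mpr (Or.inl ⟨by positivity, hfac⟩)
    exact this.trans (Nat.cast_nonneg _)

/-- for `n > 1`, the number of elementary subgraphs of `K_{n,n}` is at least
`2^{n²}·(1 − 2n⁴/2ⁿ)`; in particular the proportion of subgraphs of `K_{n,n}` that are
matching-covered tends to `1` as `n → ∞`. -/
theorem stmt5 (n : ℕ) (hn : 1 < n) :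
    ((2 : ℝ) ^ (n ^ 2) * (1 - 2 * (n : ℝ) ^ 4 / 2 ^ n)
        ≤ ((Finset.univ.filter fun G : Finset (Edge n) => elementary G).card : ℝ)) ∧
    Filter.Tendsto
      (fun m : ℕ =>
        ((Finset.univ.filter fun G : Finset (Edge m) => matchingCovered G).card : ℝ)
          / 2 ^ (m ^ 2))
      Filter.atTop (nhds 1) := by
  constructor
  · exact elem_lower n hn
  · have hupper : ∀ m : ℕ,
        ((Finset.univ.filter fun G : Finset (Edge m) => matchingCovered G).card : ℝ)
          / 2 ^ (m ^ 2) ≤ 1 := by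
      intro m
      rw [div_le_one (by positivity)]
      have h1 : (Finset.univ.filter fun G : Finset (Edge m) => matchingCovered G).card
          ≤ 2 ^ (m * m) := by
        calc (Finset.univ.filter fun G : Finset (Edge m) => matchingCovered G).card
            ≤ (Finset.univ : Finset (Finset (Edge m))).card := Finset.card_filter_le _ _
          _ = 2 ^ (m * m) := by rw [Finset.card_univ, Fintype.card_finset, card_edge]
      calc ((Finset.univ.filter fun G : Finset (Edge m) => matchingCovered G).card : ℝ)
          ≤ ((2 ^ (m * m) : ℕ) : ℝ) := Nat.cast_le.mpr h1
        _ = 2 ^ (m ^ 2) := by push_cast; rw [pow_two]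
    have hlower : ∀ m : ℕ, 2 ≤ m →
        1 - 2 * (m:ℝ) ^ 4 / 2 ^ m ≤
          ((Finset.univ.filter fun G : Finset (Edge m) => matchingCovered G).card : ℝ)
            / 2 ^ (m ^ 2) := by
      intro m hm
      have helem := elem_lower m hm
      have hmc : (Finset.univ.filter fun G : Finset (Edge m) => elementary G).card
          ≤ (Finset.univ.filter fun G : Finset (Edge m) => matchingCovered G).card := by
        apply Finset.card_le_card
        intro G hG
        rw [Finset.mem_filter] at hG ⊢
        exact ⟨hG.1, hG.2.1⟩
      rw [le_div_iff₀ (by positivity : (0:ℝ) < 2 ^ (m ^ 2))]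
      calc (1 - 2 * (m:ℝ) ^ 4 / 2 ^ m) * 2 ^ (m ^ 2)
          = 2 ^ (m ^ 2) * (1 - 2 * (m:ℝ) ^ 4 / 2 ^ m) := by ring
        _ ≤ ((Finset.univ.filter fun G : Finset (Edge m) => elementary G).card : ℝ) := helem
        _ ≤ _ := Nat.cast_le.mpr hmc
    have h0 : Filter.Tendsto (fun m : ℕ => (m:ℝ) ^ 4 * (1/2 : ℝ) ^ m)
        Filter.atTop (nhds 0) :=
      (summable_pow_mul_geometric_of_norm_lt_one 4
        (by rw [Real.norm_eq_abs, abs_of_pos] <;> norm_num : ‖(1/2 : ℝ)‖ < 1)).tendsto_atTop_zero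
    have h1 : Filter.Tendsto (fun m : ℕ => 1 - 2 * (m:ℝ) ^ 4 / 2 ^ m)
        Filter.atTop (nhds 1) := by
      have h2 := (h0.const_mul 2).const_sub 1
      simp only [mul_zero, sub_zero] at h2
      apply h2.congr
      intro m
      rw [one_div, inv_pow, ← div_eq_mul_inv]
      ring
    exact tendsto_of_tendsto_of_tendsto_of_le_of_le' h1 tendsto_const_nhds
      (Filter.eventually_atTop.mpr ⟨2, hlower⟩)
      (Filter.Eventually.of_forall hupper)
end

section
/- A random bipartite graph G on parts of size n each, with each of the n² edges present independently with probability 1/2, has no perfect matching with probability at most n²/2ⁿ. -/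
open Finset
open scoped Classical

namespace Stmt6Aux

variable {n : ℕ}

/-! ### Hall's theorem: a graph with no perfect matching has a "tight" violating pair. -/

/-- The neighbourhood of a left vertex. -/
noncomputable def Nbr (G : Finset (Edge n)) (a : Fin n) : Finset (Fin n) :=
  univ.filter fun b => (a, b) ∈ G

lemma exists_violator (G : Finset (Edge n)) (h : ¬ hasPM G) :
    ∃ S B₀ : Finset (Fin n), B₀.card + 1 = S.card ∧
      (∀ a ∈ S, ∀ b, (a, b) ∈ G → b ∈ B₀) ∧
      (∀ b ∈ B₀, ∃ a ∈ S, (a, b) ∈ G) := by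
  have hnot : ¬ ∀ s : Finset (Fin n), s.card ≤ (s.biUnion (Nbr G)).card := by
    intro hall
    obtain ⟨f, hf, hmem⟩ :=
      (Finset.all_card_le_biUnion_card_iff_exists_injective (Nbr G)).mp hall
    have hbij := (Finite.injective_iff_bijective).mp hf
    exact h ⟨Equiv.ofBijective f hbij, fun i => by
      simpa [Nbr] using hmem i⟩
  push_neg at hnot
  set V : Finset (Finset (Fin n)) :=
    univ.filter fun S => (S.biUnion (Nbr G)).card < S.card with hV
  have hVne : V.Nonempty := by
    obtain ⟨s, hs⟩ := hnot; exact ⟨s, by simp [hV, hs]⟩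
  obtain ⟨S, hSV, hmin⟩ := Finset.exists_min_image V Finset.card hVne
  have hSlt : (S.biUnion (Nbr G)).card < S.card := by
    simpa [hV] using hSV
  refine ⟨S, S.biUnion (Nbr G), ?_, ?_, ?_⟩
  · by_contra hne
    have hle : (S.biUnion (Nbr G)).card + 2 ≤ S.card := by omega
    have hSne : S.Nonempty := card_pos.mp (by omega)
    obtain ⟨a, ha⟩ := hSne
    have hsub : (S.erase a).biUnion (Nbr G) ⊆ S.biUnion (Nbr G) :=
      biUnion_subset_biUnion_of_subset_left _ (erase_subset _ _)
    have hcs := card_le_card hsub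
    have hce := card_erase_of_mem ha
    have hlt : ((S.erase a).biUnion (Nbr G)).card < (S.erase a).card := by omega
    have hmem' : S.erase a ∈ V := by simp [hV, hlt]
    have := hmin _ hmem'
    omega
  · intro a ha b hb
    exact mem_biUnion.mpr ⟨a, ha, by simp [Nbr, hb]⟩
  · intro b hb
    obtain ⟨a, ha, hab⟩ := mem_biUnion.mp hb
    exact ⟨a, ha, by simpa [Nbr] using hab⟩

/-! ### Counting the graphs with a fixed violating pair. -/

/-- The event that `(S, B₀)` is a violating pair: all edges from `S` land in `B₀`,
and every vertex of `B₀` has a neighbour in `S`. -/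
noncomputable def Ev (S B₀ : Finset (Fin n)) : Finset (Finset (Edge n)) :=
  univ.filter fun G =>
    (∀ a ∈ S, ∀ b, (a, b) ∈ G → b ∈ B₀) ∧ (∀ b ∈ B₀, ∃ a ∈ S, (a, b) ∈ G)

lemma ev_card_le (S B₀ : Finset (Fin n)) :
    (Ev S B₀).card ≤ (2 ^ S.card - 1) ^ B₀.card * 2 ^ ((n - S.card) * n) := by
  classical
  set T₁ : Finset ((b : Fin n) → b ∈ B₀ → Finset (Fin n)) :=
    B₀.pi (fun _ => S.powerset.erase ∅) with hT₁
  set T₂ : Finset (Finset (Edge n)) := ((univ \ S) ×ˢ (univ : Finset (Fin n))).powerset with hT₂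
  have hcard : (T₁ ×ˢ T₂).card = (2 ^ S.card - 1) ^ B₀.card * 2 ^ ((n - S.card) * n) := by
    rw [card_product, hT₁, hT₂, Finset.card_pi, card_powerset, card_product,
      card_sdiff_of_subset (subset_univ S), card_univ, Fintype.card_fin]
    congr 1
    rw [Finset.prod_const]
    congr 1
    rw [card_erase_of_mem (by simp), card_powerset]
  rw [← hcard]
  apply Finset.card_le_card_of_injOn
    (fun G => (fun b _ => ((G.filter fun e => e.1 ∈ S ∧ e.2 = b).image Prod.fst),
      G.filter fun e => e.1 ∉ S))
  · intro G hG
    rw [Ev, mem_coe, mem_filter] at hG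
    obtain ⟨-, h1, h2⟩ := hG
    rw [mem_coe, mem_product]
    constructor
    · rw [hT₁, Finset.mem_pi]
      intro b hb
      rw [mem_erase, mem_powerset]
      constructor
      · obtain ⟨a, ha, hab⟩ := h2 b hb
        intro hemp
        dsimp only at hemp
        have : a ∈ ((G.filter fun e => e.1 ∈ S ∧ e.2 = b).image Prod.fst) :=
          mem_image.mpr ⟨(a, b), mem_filter.mpr ⟨hab, ha, rfl⟩, rfl⟩
        rw [hemp] at this
        simp at this
      · intro a ha
        obtain ⟨e, he, rfl⟩ := mem_image.mp ha
        exact (mem_filter.mp he).2.1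
    · rw [hT₂, mem_powerset]
      intro e he
      rw [mem_filter] at he
      rw [mem_product, mem_sdiff]
      exact ⟨⟨mem_univ _, he.2⟩, mem_univ _⟩
  · intro G₁ hG₁ G₂ hG₂ heq
    simp only [coe_filter, Set.mem_setOf_eq, Ev, mem_coe, mem_filter] at hG₁ hG₂
    obtain ⟨-, h11, -⟩ := hG₁
    obtain ⟨-, h21, -⟩ := hG₂
    have heq1 := congrArg Prod.fst heq
    have heq2 := congrArg Prod.snd heq
    simp only at heq1 heq2
    have key : ∀ (Ga Gb : Finset (Edge n)),
        (∀ a ∈ S, ∀ b, (a, b) ∈ Ga → b ∈ B₀) →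
        ((fun b (_ : b ∈ B₀) => ((Ga.filter fun e => e.1 ∈ S ∧ e.2 = b).image Prod.fst))
          = fun b _ => ((Gb.filter fun e => e.1 ∈ S ∧ e.2 = b).image Prod.fst)) →
        (Ga.filter fun e => e.1 ∉ S) = (Gb.filter fun e => e.1 ∉ S) →
        Ga ⊆ Gb := by
      intro Ga Gb ha1 e1 e2 e he
      by_cases hs : e.1 ∈ S
      · have hb : e.2 ∈ B₀ := ha1 e.1 hs e.2 (by simpa using he)
        have hmem : e.1 ∈ ((Ga.filter fun e' => e'.1 ∈ S ∧ e'.2 = e.2).image Prod.fst) :=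
          mem_image.mpr ⟨e, mem_filter.mpr ⟨he, hs, rfl⟩, rfl⟩
        rw [congrFun (congrFun e1 e.2) hb] at hmem
        obtain ⟨e', he', hfst⟩ := mem_image.mp hmem
        rw [mem_filter] at he'
        have : e' = e := Prod.ext hfst he'.2.2
        exact this ▸ he'.1
      · have : e ∈ (Ga.filter fun e => e.1 ∉ S) := mem_filter.mpr ⟨he, hs⟩
        rw [e2] at this
        exact (mem_filter.mp this).1
    exact Subset.antisymm (key G₁ G₂ h11 heq1 heq2) (key G₂ G₁ h21 heq1.symm heq2.symm)

/-! ### The union bound. -/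

/-- The union-bound majorant for the number of graphs without a perfect matching. -/
def SUM (n : ℕ) : ℕ :=
  ∑ j ∈ range n, n.choose (j + 1) * (n.choose j *
    ((2 ^ (j + 1) - 1) ^ j * 2 ^ ((n - (j + 1)) * n)))

noncomputable def W (n j : ℕ) : Finset (Finset (Fin n)) :=
  univ.filter fun B₀ : Finset (Fin n) => B₀.card + 1 = j

lemma W_card_succ (j : ℕ) : (W n (j + 1)).card = n.choose j := by
  have : W n (j + 1) = powersetCard j univ := by
    rw [W, Finset.powersetCard_eq_filter, powerset_univ]
    apply filter_congr
    intro x _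
    simp
  rw [this, card_powersetCard, card_univ, Fintype.card_fin]

lemma bad_le_SUM (n : ℕ) :
    ((univ.filter fun G : Finset (Edge n) => ¬ hasPM G).card) ≤ SUM n := by
  classical
  have hsub : (univ.filter fun G : Finset (Edge n) => ¬ hasPM G)
      ⊆ (univ : Finset (Finset (Fin n))).biUnion fun S =>
          (W n S.card).biUnion fun B₀ => Ev S B₀ := by
    intro G hG
    obtain ⟨S, B₀, hc, h1, h2⟩ := exists_violator G (mem_filter.mp hG).2
    refine mem_biUnion.mpr ⟨S, mem_univ _, mem_biUnion.mpr ⟨B₀, ?_, ?_⟩⟩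
    · rw [W, mem_filter]; exact ⟨mem_univ _, hc⟩
    · rw [Ev, mem_filter]; exact ⟨mem_univ _, h1, h2⟩
  calc (univ.filter fun G : Finset (Edge n) => ¬ hasPM G).card
      ≤ ∑ S : Finset (Fin n), ((W n S.card).biUnion fun B₀ => Ev S B₀).card :=
        le_trans (card_le_card hsub) (card_biUnion_le)
    _ ≤ ∑ S : Finset (Fin n), ∑ B₀ ∈ W n S.card, (Ev S B₀).card :=
        Finset.sum_le_sum fun S _ => card_biUnion_le
    _ ≤ ∑ S : Finset (Fin n), ∑ B₀ ∈ W n S.card,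
          ((2 ^ S.card - 1) ^ (S.card - 1) * 2 ^ ((n - S.card) * n)) := by
        apply Finset.sum_le_sum
        intro S _
        apply Finset.sum_le_sum
        intro B₀ hB₀
        have hc : B₀.card + 1 = S.card := (mem_filter.mp hB₀).2
        have := ev_card_le S B₀
        rwa [show B₀.card = S.card - 1 by omega] at this
    _ = ∑ S : Finset (Fin n), (W n S.card).card *
          ((2 ^ S.card - 1) ^ (S.card - 1) * 2 ^ ((n - S.card) * n)) := by
        simp [Finset.sum_const, smul_eq_mul]
    _ = ∑ j ∈ range (n + 1), ∑ S ∈ powersetCard j (univ : Finset (Fin n)),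
          (W n S.card).card * ((2 ^ S.card - 1) ^ (S.card - 1) * 2 ^ ((n - S.card) * n)) := by
        rw [← Finset.powerset_univ, Finset.sum_powerset, card_univ, Fintype.card_fin]
    _ = ∑ j ∈ range (n + 1), n.choose j *
          ((W n j).card * ((2 ^ j - 1) ^ (j - 1) * 2 ^ ((n - j) * n))) := by
        apply Finset.sum_congr rfl
        intro j _
        rw [Finset.sum_congr rfl (fun S hS => by
          rw [(Finset.mem_powersetCard.mp hS).2]), Finset.sum_const, smul_eq_mul,
          card_powersetCard, card_univ, Fintype.card_fin]
    _ = SUM n := by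
        rw [Finset.sum_range_succ']
        have h0 : (W n 0).card = 0 := by
          rw [W]
          simp
        rw [h0]
        simp only [Nat.choose_zero_right, mul_zero, zero_mul, add_zero, SUM]
        apply Finset.sum_congr rfl
        intro j _
        rw [W_card_succ]
        simp

/-! ### Arithmetic estimates. -/

lemma L2 (s d : ℕ) (hs : 2 ≤ s) (hd : 1 ≤ d) :
    (s + d) * (s + d + 1) ≤ s * (s + 1) * 2 ^ d := by
  induction d with
  | zero => omega
  | succ d ih =>
    rcases Nat.eq_or_lt_of_le hd with h | h
    · have : d = 0 := by omega
      subst this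
      norm_num
      nlinarith
    · have hd1 : 1 ≤ d := by omega
      have := ih hd1
      have h2 : (s + (d+1)) * (s + (d+1) + 1) ≤ 2 * ((s + d) * (s + d + 1)) := by nlinarith
      calc (s + (d+1)) * (s + (d+1) + 1) ≤ 2 * ((s + d) * (s + d + 1)) := h2
        _ ≤ 2 * (s * (s + 1) * 2 ^ d) := by omega
        _ = s * (s + 1) * 2 ^ (d + 1) := by ring

lemma L1 (d : ℕ) (hd : 4 ≤ d) : (1 + d) * (2 + d) ≤ 2 * 2 ^ d := by
  induction d with
  | zero => omega
  | succ d ih =>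
    rcases Nat.eq_or_lt_of_le hd with h | h
    · have : d = 3 := by omega
      subst this; norm_num
    · have hd1 : 4 ≤ d := by omega
      have := ih hd1
      have h2 : (1 + (d+1)) * (2 + (d+1)) ≤ 2 * ((1 + d) * (2 + d)) := by nlinarith
      calc (1 + (d+1)) * (2 + (d+1)) ≤ 2 * ((1 + d) * (2 + d)) := h2
        _ ≤ 2 * (2 * 2 ^ d) := by omega
        _ = 2 * 2 ^ (d + 1) := by ring

lemma L (s d : ℕ) (hs : 1 ≤ s) (hd : 1 ≤ d) (h : 2 ≤ s ∨ 4 ≤ d) :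
    (s + d) * (s + d + 1) ≤ s * (s + 1) * 2 ^ d := by
  rcases h with h | h
  · exact L2 s d h hd
  · rcases Nat.eq_or_lt_of_le hs with h1 | h1
    · subst h1
      have := L1 d h
      nlinarith
    · exact L2 s d h1 hd

lemma Kmain (n : ℕ) (hn : 6 ≤ n) : ∀ s, 1 ≤ s → 2 * s ≤ n + 1 →
    n.choose s * n.choose (s - 1) ≤ n * 2 ^ ((n - s) * (s - 1)) := by
  intro s
  induction s with
  | zero => omega
  | succ k ih =>
    intro _ h2s
    rcases Nat.eq_zero_or_pos k with hk0 | hk1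
    · subst hk0; simp
    · have ihk := ih hk1 (by omega)
      have id1 : n.choose (k + 1) * (k + 1) = n.choose k * (n - k) :=
        Nat.choose_succ_right_eq n k
      have id2 : n.choose k * k = n.choose (k - 1) * (n - (k - 1)) := by
        have := Nat.choose_succ_right_eq n (k - 1)
        have hk : k - 1 + 1 = k := by omega
        rwa [hk] at this
      have hd : 1 ≤ n - 2 * k := by omega
      have hL : (k + (n - 2 * k)) * (k + (n - 2 * k) + 1) ≤ k * (k + 1) * 2 ^ (n - 2 * k) := by
        apply L k (n - 2 * k) hk1 hd
        rcases Nat.lt_or_ge k 2 with h | h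
        · right; omega
        · left; exact h
      have hnk : k + (n - 2 * k) = n - k := by omega
      have hnk1 : n - k + 1 = n - (k - 1) := by omega
      rw [hnk] at hL
      have hexp : (n - k) * (k - 1) + (n - 2 * k) = (n - (k + 1)) * k := by
        have h1 : k ≤ n - k := by omega
        have h2 : 1 ≤ k := hk1
        have h3 : k + 1 ≤ n := by omega
        zify [h1, h2, h3, Nat.le_sub_iff_add_le, show k ≤ n by omega, show 2*k ≤ n by omega]
        ring
      refine Nat.le_of_mul_le_mul_right ?_ (show 0 < (k + 1) * k by positivity)
      calc n.choose (k + 1) * n.choose (k + 1 - 1) * ((k + 1) * k)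
          = (n.choose (k + 1) * (k + 1)) * (n.choose k * k) := by
            simp only [Nat.add_sub_cancel]; ring
        _ = (n.choose k * (n - k)) * (n.choose (k - 1) * (n - (k - 1))) := by rw [id1, id2]
        _ = (n.choose k * n.choose (k - 1)) * ((n - k) * (n - (k - 1))) := by ring
        _ ≤ (n * 2 ^ ((n - k) * (k - 1))) * ((n - k) * (n - (k - 1))) := by
            apply Nat.mul_le_mul_right _ ihk
        _ = (n * 2 ^ ((n - k) * (k - 1))) * ((n - k) * (n - k + 1)) := by rw [hnk1]
        _ ≤ (n * 2 ^ ((n - k) * (k - 1))) * (k * (k + 1) * 2 ^ (n - 2 * k)) := by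
            apply Nat.mul_le_mul_left _ hL
        _ = n * (2 ^ ((n - k) * (k - 1)) * 2 ^ (n - 2 * k)) * ((k + 1) * k) := by ring
        _ = n * 2 ^ ((n - (k + 1)) * k) * ((k + 1) * k) := by
            rw [← pow_add, hexp]

lemma K (n s : ℕ) (hn : 6 ≤ n) (hs1 : 1 ≤ s) (hsn : s ≤ n) :
    n.choose s * n.choose (s - 1) ≤ n * 2 ^ ((n - s) * (s - 1)) := by
  rcases le_or_gt (2 * s) (n + 1) with h | h
  · exact Kmain n hn s hs1 h
  · have h2 : 1 ≤ n + 1 - s := by omega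
    have := Kmain n hn (n + 1 - s) h2 (by omega)
    have e1 : n.choose (n + 1 - s) = n.choose (s - 1) := by
      rw [show n + 1 - s = n - (s - 1) by omega]
      exact Nat.choose_symm (by omega)
    have e2 : n.choose (n + 1 - s - 1) = n.choose s := by
      rw [show n + 1 - s - 1 = n - s by omega]
      exact Nat.choose_symm hsn
    have e3 : (n - (n + 1 - s)) * (n + 1 - s - 1) = (n - s) * (s - 1) := by
      rw [show n - (n + 1 - s) = s - 1 by omega, show n + 1 - s - 1 = n - s by omega]
      ring
    rw [e1, e2, e3] at this
    linarith [this]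

lemma SUM_le_of_big (n : ℕ) (hn : 6 ≤ n) : SUM n ≤ n ^ 2 * 2 ^ (n ^ 2 - n) := by
  have hterm : ∀ j ∈ range n, n.choose (j + 1) * (n.choose j *
      ((2 ^ (j + 1) - 1) ^ j * 2 ^ ((n - (j + 1)) * n))) ≤ n * 2 ^ (n ^ 2 - n) := by
    intro j hj
    have hjn : j + 1 ≤ n := Finset.mem_range.mp hj
    have hK := K n (j + 1) hn (by omega) hjn
    simp only [Nat.add_sub_cancel] at hK
    have hp : (2 ^ (j + 1) - 1) ^ j ≤ 2 ^ ((j + 1) * j) := by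
      calc (2 ^ (j + 1) - 1) ^ j ≤ (2 ^ (j + 1)) ^ j :=
            Nat.pow_le_pow_left (Nat.sub_le _ _) j
        _ = 2 ^ ((j + 1) * j) := by rw [← pow_mul]
    have hexp : (n - (j + 1)) * j + ((j + 1) * j + (n - (j + 1)) * n) = n ^ 2 - n := by
      have h1 : j + 1 ≤ n := hjn
      have h2 : n ≤ n ^ 2 := Nat.le_self_pow (by omega) n
      zify [h1, h2]
      ring
    calc n.choose (j + 1) * (n.choose j *
          ((2 ^ (j + 1) - 1) ^ j * 2 ^ ((n - (j + 1)) * n)))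
        = (n.choose (j + 1) * n.choose j) * ((2 ^ (j + 1) - 1) ^ j * 2 ^ ((n - (j + 1)) * n)) := by
          ring
      _ ≤ (n * 2 ^ ((n - (j + 1)) * j)) * (2 ^ ((j + 1) * j) * 2 ^ ((n - (j + 1)) * n)) :=
          Nat.mul_le_mul hK (Nat.mul_le_mul_right _ hp)
      _ = n * 2 ^ ((n - (j + 1)) * j + ((j + 1) * j + (n - (j + 1)) * n)) := by
          rw [← pow_add, mul_assoc, ← pow_add]
      _ = n * 2 ^ (n ^ 2 - n) := by rw [hexp]
  calc SUM n ≤ ∑ _j ∈ range n, n * 2 ^ (n ^ 2 - n) := Finset.sum_le_sum hterm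
    _ = n * (n * 2 ^ (n ^ 2 - n)) := by rw [Finset.sum_const, card_range, smul_eq_mul]
    _ = n ^ 2 * 2 ^ (n ^ 2 - n) := by ring

lemma SUM_le (n : ℕ) (hn : n ≠ 4) : SUM n ≤ n ^ 2 * 2 ^ (n ^ 2 - n) := by
  rcases le_or_gt 6 n with h | h
  · exact SUM_le_of_big n h
  · interval_cases n <;> first | decide | omega

lemma bad_card_le (n : ℕ) :
    ((univ.filter fun G : Finset (Edge n) => ¬ hasPM G).card) ≤ n ^ 2 * 2 ^ (n ^ 2 - n) := by
  by_cases h4 : n = 4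
  · subst h4
    calc ((univ.filter fun G : Finset (Edge 4) => ¬ hasPM G).card)
        ≤ (univ : Finset (Finset (Edge 4))).card := card_filter_le _ _
      _ = 2 ^ 16 := by
          rw [card_univ, Fintype.card_finset]
          norm_num
      _ = 4 ^ 2 * 2 ^ (4 ^ 2 - 4) := by norm_num
  · exact le_trans (bad_le_SUM n) (SUM_le n h4)

end Stmt6Aux

/-- a uniformly random balanced bipartite graph (each of the `n²` edges present
independently with probability `1/2`) has no perfect matching with probability at most
`n²/2ⁿ`. -/
theorem stmt6 (n : ℕ) :
    ((Finset.univ.filter fun G : Finset (Edge n) => ¬ hasPM G).card : ℝ) / 2 ^ (n ^ 2)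
      ≤ (n : ℝ) ^ 2 / 2 ^ n := by
  rw [div_le_div_iff₀ (by positivity) (by positivity)]
  have hnat : ((Finset.univ.filter fun G : Finset (Edge n) => ¬ hasPM G).card) * 2 ^ n
      ≤ n ^ 2 * 2 ^ (n ^ 2) := by
    calc ((Finset.univ.filter fun G : Finset (Edge n) => ¬ hasPM G).card) * 2 ^ n
        ≤ (n ^ 2 * 2 ^ (n ^ 2 - n)) * 2 ^ n :=
          Nat.mul_le_mul_right _ (Stmt6Aux.bad_card_le n)
      _ = n ^ 2 * 2 ^ (n ^ 2 - n + n) := by rw [mul_assoc, ← pow_add]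
      _ = n ^ 2 * 2 ^ (n ^ 2) := by
          rw [Nat.sub_add_cancel (Nat.le_self_pow (by omega) n)]
  exact_mod_cast hnat
end

section
/- Let G ⊆ K_{n,n} be matching-covered and not itself a perfect matching. Then there exists a matching-covered graph H ⊆ G with χ(H) = χ(G) − 1. -/
set_option maxHeartbeats 1000000


open Finset
open scoped Classical

namespace Stmt8Aux

section Components

open SimpleGraph

variable {V : Type*} [Finite V]

omit [Finite V] in
lemma reach_cases {G' G : SimpleGraph V} {u v : V}
    (hadj : ∀ x y, G.Adj x y → G'.Adj x y ∨ (x = u ∧ y = v) ∨ (x = v ∧ y = u))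
    {x y : V} (h : G.Reachable x y) :
    G'.Reachable x y ∨ (G'.Reachable x u ∧ G'.Reachable v y) ∨
      (G'.Reachable x v ∧ G'.Reachable u y) := by
  obtain ⟨w⟩ := h
  induction w with
  | nil => exact Or.inl (Reachable.refl _)
  | @cons x x' y hadj' p ih =>
    rcases hadj _ _ hadj' with h1 | ⟨rfl, rfl⟩ | ⟨rfl, rfl⟩
    · rcases ih with h2 | ⟨h2, h3⟩ | ⟨h2, h3⟩
      · exact Or.inl (h1.reachable.trans h2)
      · exact Or.inr (Or.inl ⟨h1.reachable.trans h2, h3⟩)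
      · exact Or.inr (Or.inr ⟨h1.reachable.trans h2, h3⟩)
    · rcases ih with h2 | ⟨h2, h3⟩ | ⟨h2, h3⟩
      · exact Or.inr (Or.inl ⟨Reachable.refl _, h2⟩)
      · exact Or.inl (h2.symm.trans h3)
      · exact Or.inl h3
    · rcases ih with h2 | ⟨h2, h3⟩ | ⟨h2, h3⟩
      · exact Or.inr (Or.inr ⟨Reachable.refl _, h2⟩)
      · exact Or.inl h3
      · exact Or.inl (h2.symm.trans h3)

lemma ncomp_le_of_le {G' G : SimpleGraph V} (hle : G' ≤ G) :
    Nat.card G.ConnectedComponent ≤ Nat.card G'.ConnectedComponent := by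
  apply Nat.card_le_card_of_surjective
    (ConnectedComponent.map (SimpleGraph.Hom.ofLE hle))
  intro c
  refine c.ind (fun v => ?_)
  exact ⟨G'.connectedComponentMk v, rfl⟩

lemma ncomp_le_add_one {G' G : SimpleGraph V} (hle : G' ≤ G) {u v : V}
    (hadj : ∀ x y, G.Adj x y → G'.Adj x y ∨ (x = u ∧ y = v) ∨ (x = v ∧ y = u)) :
    Nat.card G'.ConnectedComponent ≤ Nat.card G.ConnectedComponent + 1 := by
  classical
  set F : G'.ConnectedComponent → G.ConnectedComponent :=
    ConnectedComponent.map (SimpleGraph.Hom.ofLE hle) with hF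
  have hFmk : ∀ w : V, F (G'.connectedComponentMk w) = G.connectedComponentMk w := fun _ => rfl
  set ψ : G'.ConnectedComponent → Option G.ConnectedComponent := fun c =>
    if c = G'.connectedComponentMk v ∧ ¬ G'.Reachable u v then none else some (F c) with hψ
  have hinj : Function.Injective ψ := by
    intro c d h
    simp only [hψ] at h
    by_cases hc : c = G'.connectedComponentMk v ∧ ¬ G'.Reachable u v <;>
      by_cases hd : d = G'.connectedComponentMk v ∧ ¬ G'.Reachable u v
    · exact hc.1.trans hd.1.symm
    · rw [if_pos hc, if_neg hd] at h; exact absurd h (by simp)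
    · rw [if_neg hc, if_pos hd] at h; exact absurd h (by simp)
    -- both in `some` branch
    rw [if_neg hc, if_neg hd] at h
    rw [Option.some_inj] at h
    by_contra hne
    obtain ⟨x, hx'⟩ := c.exists_rep
    obtain ⟨y, hy'⟩ := d.exists_rep
    have hx : G'.connectedComponentMk x = c := hx'
    have hy : G'.connectedComponentMk y = d := hy'
    have hreachG : G.Reachable x y := by
      have : G.connectedComponentMk x = G.connectedComponentMk y := by
        rw [← hFmk x, ← hFmk y, hx, hy]; exact h
      exact ConnectedComponent.exact this
    have hnreach : ¬ G'.Reachable x y := by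
      intro hr
      exact hne (by rw [← hx, ← hy]; exact ConnectedComponent.sound hr)
    rcases reach_cases hadj hreachG with h1 | ⟨h1, h2⟩ | ⟨h1, h2⟩
    · exact hnreach h1
    · by_cases huv : G'.Reachable u v
      · exact hnreach ((h1.trans huv).trans h2)
      · exact hd ⟨by rw [← hy]; exact (ConnectedComponent.sound h2.symm), huv⟩
    · by_cases huv : G'.Reachable u v
      · exact hnreach ((h1.trans huv.symm).trans h2)
      · exact hc ⟨by rw [← hx]; exact (ConnectedComponent.sound h1), huv⟩
  haveI : Fintype G.ConnectedComponent := Fintype.ofFinite _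
  calc Nat.card G'.ConnectedComponent ≤ Nat.card (Option G.ConnectedComponent) :=
        Nat.card_le_card_of_injective ψ hinj
    _ = Nat.card G.ConnectedComponent + 1 := by
        haveI : Fintype G.ConnectedComponent := Fintype.ofFinite _
        simp [Nat.card_eq_fintype_card]

lemma ncomp_le_of_reach {G' G : SimpleGraph V} (hle : G' ≤ G) {u v : V}
    (hadj : ∀ x y, G.Adj x y → G'.Adj x y ∨ (x = u ∧ y = v) ∨ (x = v ∧ y = u))
    (hr : G'.Reachable u v) :
    Nat.card G'.ConnectedComponent ≤ Nat.card G.ConnectedComponent := by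
  set F : G'.ConnectedComponent → G.ConnectedComponent :=
    ConnectedComponent.map (SimpleGraph.Hom.ofLE hle) with hF
  have hFmk : ∀ w : V, F (G'.connectedComponentMk w) = G.connectedComponentMk w := fun _ => rfl
  apply Nat.card_le_card_of_injective F
  intro c d h
  by_contra hne
  obtain ⟨x, hx'⟩ := c.exists_rep
  obtain ⟨y, hy'⟩ := d.exists_rep
  have hx : G'.connectedComponentMk x = c := hx'
  have hy : G'.connectedComponentMk y = d := hy'
  have hreachG : G.Reachable x y := by
    have : G.connectedComponentMk x = G.connectedComponentMk y := by
      rw [← hFmk x, ← hFmk y, hx, hy]; exact h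
    exact ConnectedComponent.exact this
  have hnreach : ¬ G'.Reachable x y := by
    intro hr'
    exact hne (by rw [← hx, ← hy]; exact ConnectedComponent.sound hr')
  rcases reach_cases hadj hreachG with h1 | ⟨h1, h2⟩ | ⟨h1, h2⟩
  · exact hnreach h1
  · exact hnreach ((h1.trans hr).trans h2)
  · exact hnreach ((h1.trans hr.symm).trans h2)

lemma ncomp_lower {G' G : SimpleGraph V} (hle : G' ≤ G) (A : Finset V)
    (hG : ∀ a ∈ A, ∀ b ∈ A, G.Reachable a b)
    (hH : ∀ a ∈ A, ∀ b ∈ A, a ≠ b → ¬ G'.Reachable a b) :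
    Nat.card G.ConnectedComponent + A.card ≤ Nat.card G'.ConnectedComponent + 1 := by
  classical
  haveI : Fintype G.ConnectedComponent := Fintype.ofFinite _
  haveI : Fintype G'.ConnectedComponent := Fintype.ofFinite _
  rcases A.eq_empty_or_nonempty with rfl | ⟨a₀, ha₀⟩
  · simpa using Nat.le_succ_of_le (ncomp_le_of_le hle)
  set F : G'.ConnectedComponent → G.ConnectedComponent :=
    ConnectedComponent.map (SimpleGraph.Hom.ofLE hle) with hF
  have hFmk : ∀ w : V, F (G'.connectedComponentMk w) = G.connectedComponentMk w := fun _ => rfl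
  have hFsurj : Function.Surjective F := by
    intro c; refine c.ind (fun v => ?_); exact ⟨G'.connectedComponentMk v, rfl⟩
  set B : Finset G'.ConnectedComponent := A.image (G'.connectedComponentMk) with hB
  have hBcard : B.card = A.card := by
    rw [hB, Finset.card_image_of_injOn]
    intro p hp q hq hpq
    by_contra hne
    exact hH p hp q hq hne (ConnectedComponent.exact hpq)
  have hBfib : ∀ b ∈ B, F b = G.connectedComponentMk a₀ := by
    intro b hb
    rw [hB, Finset.mem_image] at hb
    obtain ⟨p, hp, rfl⟩ := hb
    rw [hFmk]
    exact ConnectedComponent.sound (hG p hp a₀ ha₀)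
  set r : G.ConnectedComponent → G'.ConnectedComponent := Function.surjInv hFsurj with hr
  have hrinj : Function.Injective r := Function.injective_surjInv hFsurj
  have hFr : ∀ t, F (r t) = t := Function.surjInv_eq hFsurj
  set C : Finset G'.ConnectedComponent :=
    (Finset.univ.erase (G.connectedComponentMk a₀)).image r with hC
  have hCcard : C.card = Nat.card G.ConnectedComponent - 1 := by
    rw [hC, Finset.card_image_of_injective _ hrinj,
      Finset.card_erase_of_mem (Finset.mem_univ _), Nat.card_eq_fintype_card]
    rfl
  have hdisj : Disjoint B C := by
    rw [Finset.disjoint_left]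
    intro b hb hbC
    rw [hC, Finset.mem_image] at hbC
    obtain ⟨t, ht, rfl⟩ := hbC
    rw [Finset.mem_erase] at ht
    exact ht.1 (by rw [← hFr t, hBfib _ hb])
  have hsub : B ∪ C ⊆ Finset.univ := Finset.subset_univ _
  have := Finset.card_le_card hsub
  rw [Finset.card_union_of_disjoint hdisj, hBcard, hCcard] at this
  have hcardG' : (Finset.univ : Finset G'.ConnectedComponent).card =
      Nat.card G'.ConnectedComponent := (Nat.card_eq_fintype_card).symm
  have hpos : 1 ≤ Nat.card G.ConnectedComponent := by
    rw [Nat.card_eq_fintype_card]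
    exact Fintype.card_pos_iff.mpr ⟨G.connectedComponentMk a₀⟩
  omega

end Components

/-! ### graphOn lemmas -/

section GraphOn

open SimpleGraph Sum

variable {n : ℕ}

lemma adj_graphOn_iff {G : Finset (Edge n)} {a b : Fin n} :
    (graphOn G).Adj (inl a) (inr b) ↔ (a, b) ∈ G := by
  rw [graphOn, SimpleGraph.fromRel_adj]
  constructor
  · rintro ⟨-, ⟨e, he, h1, h2⟩ | ⟨e, he, h1, h2⟩⟩
    · cases h1; cases h2; simpa using he
    · exact absurd h1 (by simp)
  · intro h
    exact ⟨by simp, Or.inl ⟨(a, b), h, rfl, rfl⟩⟩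

lemma reach_of_mem {G : Finset (Edge n)} {a b : Fin n} (h : (a, b) ∈ G) :
    (graphOn G).Reachable (inl a) (inr b) :=
  (adj_graphOn_iff.mpr h).reachable

lemma graphOn_mono {H G : Finset (Edge n)} (h : H ⊆ G) : graphOn H ≤ graphOn G := by
  intro x y hxy
  rw [graphOn, SimpleGraph.fromRel_adj] at hxy ⊢
  refine ⟨hxy.1, ?_⟩
  rcases hxy.2 with ⟨e, he, h1, h2⟩ | ⟨e, he, h1, h2⟩
  · exact Or.inl ⟨e, h he, h1, h2⟩
  · exact Or.inr ⟨e, h he, h1, h2⟩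

lemma adj_graphOn_erase {G : Finset (Edge n)} {e : Edge n} :
    ∀ x y, (graphOn G).Adj x y → (graphOn (G.erase e)).Adj x y ∨
      (x = inl e.1 ∧ y = inr e.2) ∨ (x = inr e.2 ∧ y = inl e.1) := by
  intro x y hxy
  rw [graphOn, SimpleGraph.fromRel_adj] at hxy
  obtain ⟨hne, hrel⟩ := hxy
  rcases hrel with ⟨e', he', h1, h2⟩ | ⟨e', he', h1, h2⟩
  · by_cases hee : e' = e
    · subst hee; exact Or.inr (Or.inl ⟨h1, h2⟩)
    · refine Or.inl ?_
      rw [graphOn, SimpleGraph.fromRel_adj]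
      exact ⟨hne, Or.inl ⟨e', Finset.mem_erase.mpr ⟨hee, he'⟩, h1, h2⟩⟩
  · by_cases hee : e' = e
    · subst hee; exact Or.inr (Or.inr ⟨h2, h1⟩)
    · refine Or.inl ?_
      rw [graphOn, SimpleGraph.fromRel_adj]
      exact ⟨hne, Or.inr ⟨e', Finset.mem_erase.mpr ⟨hee, he'⟩, h1, h2⟩⟩

lemma numComponents_erase_le {G : Finset (Edge n)} (e : Edge n) :
    numComponents (G.erase e) ≤ numComponents G + 1 :=
  ncomp_le_add_one (graphOn_mono (Finset.erase_subset _ _)) adj_graphOn_erase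

lemma numComponents_erase_eq_le {G : Finset (Edge n)} {e : Edge n}
    (hr : (graphOn (G.erase e)).Reachable (inl e.1) (inr e.2)) :
    numComponents (G.erase e) ≤ numComponents G :=
  ncomp_le_of_reach (graphOn_mono (Finset.erase_subset _ _)) adj_graphOn_erase hr

lemma numComponents_mono {H G : Finset (Edge n)} (h : H ⊆ G) :
    numComponents G ≤ numComponents H :=
  ncomp_le_of_le (graphOn_mono h)

lemma numComponents_sub_le {n : ℕ} : ∀ (m : ℕ) (K H : Finset (Edge n)), H ⊆ K →
    (K \ H).card = m → numComponents H ≤ numComponents K + m := by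
  intro m
  induction m with
  | zero =>
    intro K H hsub hcard
    have : K = H := by
      have := Finset.card_sdiff_add_card_eq_card hsub
      rw [hcard] at this
      exact (Finset.eq_of_subset_of_card_le hsub (by omega)).symm
    simp [this]
  | succ m ih =>
    intro K H hsub hcard
    have hne : (K \ H).Nonempty := Finset.card_pos.mp (by omega)
    obtain ⟨e, he⟩ := hne
    rw [Finset.mem_sdiff] at he
    have hsub' : H ⊆ K.erase e := fun x hx =>
      Finset.mem_erase.mpr ⟨fun hxe => he.2 (hxe ▸ hx), hsub hx⟩
    have hcard' : (K.erase e \ H).card = m := by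
      have : K.erase e \ H = (K \ H).erase e := by
        ext x; simp [Finset.mem_erase, Finset.mem_sdiff]; tauto
      rw [this, Finset.card_erase_of_mem (Finset.mem_sdiff.mpr he), hcard]
      omega
    calc numComponents H ≤ numComponents (K.erase e) + m := ih _ _ hsub' hcard'
      _ ≤ numComponents K + 1 + m := by
          have := numComponents_erase_le (G := K) e; omega
      _ = numComponents K + (m + 1) := by omega

end GraphOn

/-! ### perfect matchings -/

section PM

variable {n : ℕ}

noncomputable def pm (σ : Equiv.Perm (Fin n)) : Finset (Edge n) :=
  Finset.univ.image fun i => (i, σ i)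

lemma mem_pm {σ : Equiv.Perm (Fin n)} {i j : Fin n} : (i, j) ∈ pm σ ↔ σ i = j := by
  simp only [pm, Finset.mem_image, Finset.mem_univ, true_and]
  constructor
  · rintro ⟨a, ha⟩
    rw [Prod.mk.injEq] at ha
    obtain ⟨rfl, h⟩ := ha
    exact h
  · intro h; exact ⟨i, by rw [h]⟩

lemma mem_pm' {σ : Equiv.Perm (Fin n)} {e : Edge n} : e ∈ pm σ ↔ σ e.1 = e.2 := by
  cases e; exact mem_pm

lemma isPM_pm (σ : Equiv.Perm (Fin n)) : isPM (pm σ) := ⟨σ, rfl⟩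

lemma isPM_iff {M : Finset (Edge n)} : isPM M ↔ ∃ σ, M = pm σ := Iff.rfl

lemma mc_iff {G : Finset (Edge n)} : matchingCovered G ↔
    (∃ σ, pm σ ⊆ G) ∧ ∀ e ∈ G, ∃ σ, pm σ ⊆ G ∧ e ∈ pm σ := by
  constructor
  · rintro ⟨S, ⟨M₀, hM₀⟩, hpm, rfl⟩
    have hsub : ∀ M ∈ S, M ⊆ S.sup id := fun M hM => Finset.le_sup (f := id) hM
    constructor
    · obtain ⟨σ, rfl⟩ := hpm _ hM₀
      exact ⟨σ, hsub _ hM₀⟩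
    · intro e he
      rw [Finset.mem_sup] at he
      obtain ⟨M, hM, heM⟩ := he
      obtain ⟨σ, rfl⟩ := hpm _ hM
      exact ⟨σ, hsub _ hM, heM⟩
  · rintro ⟨⟨σ₀, hσ₀⟩, hcov⟩
    refine ⟨(Finset.univ.filter (fun ν : Equiv.Perm (Fin n) => pm ν ⊆ G)).image pm,
      ⟨pm σ₀, Finset.mem_image_of_mem _ (by simp [hσ₀])⟩, ?_, ?_⟩
    · intro M hM
      rw [Finset.mem_image] at hM
      obtain ⟨ν, _, rfl⟩ := hM
      exact isPM_pm ν
    · apply Finset.Subset.antisymm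
      · intro e he
        rw [Finset.mem_sup] at he
        obtain ⟨M, hM, heM⟩ := he
        rw [Finset.mem_image] at hM
        obtain ⟨ν, hν, rfl⟩ := hM
        rw [Finset.mem_filter] at hν
        exact hν.2 heM
      · intro e he
        obtain ⟨σ, hσG, heσ⟩ := hcov e he
        rw [Finset.mem_sup]
        exact ⟨pm σ, Finset.mem_image_of_mem _ (by simp [hσG]), heσ⟩

lemma mc_union_pm {H : Finset (Edge n)} (hH : matchingCovered H) (ν : Equiv.Perm (Fin n)) :
    matchingCovered (H ∪ pm ν) := by
  rw [mc_iff] at hH ⊢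
  refine ⟨⟨ν, Finset.subset_union_right⟩, ?_⟩
  intro e he
  rcases Finset.mem_union.mp he with he' | he'
  · obtain ⟨σ, hσ, heσ⟩ := hH.2 e he'
    exact ⟨σ, hσ.trans Finset.subset_union_left, heσ⟩
  · exact ⟨ν, Finset.subset_union_right, he'⟩

end PM

/-! ### alternating chains -/

section Chains

open SimpleGraph Sum

variable {n : ℕ} {G H : Finset (Edge n)} {σ τ : Equiv.Perm (Fin n)}

lemma tau_apply_f (σ τ : Equiv.Perm (Fin n)) (i : Fin n) : τ ((τ⁻¹ * σ) i) = σ i := by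
  simp [Equiv.Perm.mul_apply]

lemma pow_succ_apply (f : Equiv.Perm (Fin n)) (l : ℕ) (a : Fin n) :
    (f ^ (l + 1)) a = f ((f ^ l) a) := by
  rw [pow_succ', Equiv.Perm.mul_apply]

lemma pow_zero_apply (f : Equiv.Perm (Fin n)) (a : Fin n) : (f ^ 0) a = a := by simp

lemma sigma_edge_mem (hσ : pm σ ⊆ G) (i : Fin n) : (i, σ i) ∈ G := hσ (mem_pm.mpr rfl)

lemma tau_edge_next (hτ : pm τ ⊆ H) (a : Fin n) (l : ℕ) :
    (((τ⁻¹ * σ) ^ (l + 1)) a, σ (((τ⁻¹ * σ) ^ l) a)) ∈ H := by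
  apply hτ
  rw [mem_pm, pow_succ_apply, tau_apply_f]

lemma chainG (hσ : pm σ ⊆ G) (hτ : pm τ ⊆ G) (a : Fin n) :
    ∀ l, (graphOn G).Reachable (inl a) (inl (((τ⁻¹ * σ) ^ l) a)) := by
  intro l
  induction l with
  | zero => rw [pow_zero_apply]
  | succ l ih =>
    have r1 := reach_of_mem (sigma_edge_mem hσ (((τ⁻¹ * σ) ^ l) a))
    have r2 := reach_of_mem (tau_edge_next (σ := σ) hτ a l)
    exact ih.trans (r1.trans r2.symm)

lemma chainH (hτ : pm τ ⊆ H) (a : Fin n) (l0 : ℕ) :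
    ∀ l, l0 ≤ l → (∀ j, l0 ≤ j → j < l → ((((τ⁻¹ * σ) ^ j) a), σ (((τ⁻¹ * σ) ^ j) a)) ∈ H) →
      (graphOn H).Reachable (inl (((τ⁻¹ * σ) ^ l0) a)) (inl (((τ⁻¹ * σ) ^ l) a)) := by
  intro l
  induction l with
  | zero =>
    intro hl _
    have h0 : l0 = 0 := Nat.le_zero.mp hl
    subst h0
    exact Reachable.refl _
  | succ l ih =>
    intro hl hedges
    rcases Nat.eq_or_lt_of_le hl with heq | hlt'
    · subst heq
      exact Reachable.refl _
    · have hle : l0 ≤ l := Nat.lt_succ_iff.mp hlt'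
      have r0 := ih hle (fun j hj1 hj2 => hedges j hj1 (Nat.lt_succ_of_lt hj2))
      have r1 := reach_of_mem (hedges l hle (Nat.lt_succ_self l))
      have r2 := reach_of_mem (tau_edge_next (σ := σ) hτ a l)
      exact r0.trans (r1.trans r2.symm)

lemma reach_erase (hσ : pm σ ⊆ G) (hτ : pm τ ⊆ G) {a : Fin n} (hne : τ a ≠ σ a) :
    (graphOn (G.erase (a, σ a))).Reachable (inl a) (inr (σ a)) := by
  classical
  set f := τ⁻¹ * σ with hf
  set G' := G.erase (a, σ a) with hG'
  have hτ' : ∀ j : Fin n, (j, τ j) ∈ G' := by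
    intro j
    rw [hG', Finset.mem_erase]
    refine ⟨?_, sigma_edge_mem (σ := τ) hτ j⟩
    intro hj
    rw [Prod.mk.injEq] at hj
    obtain ⟨rfl, hj2⟩ := hj
    exact hne hj2
  have hσ' : ∀ j : Fin n, j ≠ a → (j, σ j) ∈ G' := by
    intro j hj
    rw [hG', Finset.mem_erase]
    refine ⟨?_, sigma_edge_mem hσ j⟩
    intro hj'
    rw [Prod.mk.injEq] at hj'
    exact hj hj'.1
  have hτedge : ∀ l : ℕ, ((f ^ (l + 1)) a, σ ((f ^ l) a)) ∈ G' := by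
    intro l
    have : τ ((f ^ (l + 1)) a) = σ ((f ^ l) a) := by
      rw [pow_succ_apply, hf, tau_apply_f]
    rw [← this]
    exact hτ' _
  -- first return to a
  have hex : ∃ k, 1 ≤ k ∧ (f ^ k) a = a := by
    refine ⟨orderOf f, ?_, by rw [pow_orderOf_eq_one]; rfl⟩
    have : orderOf f ≠ 0 := by
      intro h0
      exact (orderOf_eq_zero_iff.mp h0) (isOfFinOrder_of_finite f)
    omega
  set k₀ := Nat.find hex with hk₀
  obtain ⟨hk₀1, hk₀a⟩ := Nat.find_spec hex
  have hnoret : ∀ j, 1 ≤ j → j < k₀ → (f ^ j) a ≠ a := by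
    intro j hj1 hj2 hja
    exact absurd ⟨hj1, hja⟩ (Nat.find_min hex hj2)
  have claim : ∀ k, 1 ≤ k → (∀ j, 1 ≤ j → j < k → (f ^ j) a ≠ a) →
      (graphOn G').Reachable (inr (σ a)) (inl ((f ^ k) a)) := by
    intro k
    induction k with
    | zero => omega
    | succ k ih =>
      intro _ hnr
      rcases Nat.eq_or_lt_of_le (Nat.one_le_iff_ne_zero.mpr (Nat.succ_ne_zero k)) with heq | hlt
      · have hk0 : k = 0 := by omega
        subst hk0
        have : ((f ^ 1) a, σ ((f ^ 0) a)) ∈ G' := hτedge 0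
        rw [pow_zero_apply] at this
        exact (reach_of_mem this).symm
      · have hk1 : 1 ≤ k := by omega
        have ihr := ih hk1 (fun j hj1 hj2 => hnr j hj1 (Nat.lt_succ_of_lt hj2))
        have r1 := reach_of_mem (hσ' _ (hnr k hk1 (Nat.lt_succ_self k)))
        have r2 := reach_of_mem (hτedge k)
        exact ihr.trans (r1.trans r2.symm)
  have := claim k₀ hk₀1 hnoret
  rw [hk₀a] at this
  exact this.symm

end Chains

/-! ### Fact 1 -/

section Fact1

open Sum

variable {n : ℕ}

lemma fact1 {G H : Finset (Edge n)} (hG : matchingCovered G) (hH : matchingCovered H)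
    (hsub : H ⊆ G) (hne : H ≠ G) :
    numComponents H + 1 ≤ numComponents G + (G \ H).card := by
  have hDne : (G \ H).Nonempty := by
    rw [Finset.sdiff_nonempty]
    intro h
    exact hne (Finset.Subset.antisymm hsub h)
  obtain ⟨e, he⟩ := hDne
  rw [Finset.mem_sdiff] at he
  obtain ⟨heG, heH⟩ := he
  rw [mc_iff] at hG hH
  obtain ⟨σ, hσG, heσ⟩ := hG.2 e heG
  obtain ⟨τ, hτH⟩ := hH.1
  have hτG : pm τ ⊆ G := hτH.trans hsub
  obtain ⟨a, b⟩ := e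
  have hb : σ a = b := mem_pm.mp heσ
  subst hb
  have hτa : τ a ≠ σ a := by
    intro h
    exact heH (hτH (mem_pm.mpr h))
  have hreach := reach_erase hσG hτG hτa
  have h1 : numComponents (G.erase (a, σ a)) ≤ numComponents G :=
    numComponents_erase_eq_le hreach
  have hsub' : H ⊆ G.erase (a, σ a) := fun x hx =>
    Finset.mem_erase.mpr ⟨fun hxe => heH (hxe ▸ hx), hsub hx⟩
  have h2 : numComponents H ≤ numComponents (G.erase (a, σ a)) +
      (G.erase (a, σ a) \ H).card := numComponents_sub_le _ _ _ hsub' rfl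
  have hcard : (G.erase (a, σ a) \ H).card + 1 = (G \ H).card := by
    have h3 : G.erase (a, σ a) \ H = (G \ H).erase (a, σ a) := by
      ext x; simp [Finset.mem_erase, Finset.mem_sdiff]; tauto
    rw [h3, Finset.card_erase_of_mem (Finset.mem_sdiff.mpr ⟨heG, heH⟩)]
    have : 0 < (G \ H).card := Finset.card_pos.mpr ⟨(a, σ a), Finset.mem_sdiff.mpr ⟨heG, heH⟩⟩
    omega
  omega

end Fact1

/-! ### The Hall patching lemma -/

section KL

open SimpleGraph Sum

variable {n : ℕ}

lemma adj_graphOn_cases {H : Finset (Edge n)} {p q : Fin n ⊕ Fin n}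
    (h : (graphOn H).Adj p q) :
    ∃ i j, (i, j) ∈ H ∧ ((p = inl i ∧ q = inr j) ∨ (p = inr j ∧ q = inl i)) := by
  rw [graphOn, SimpleGraph.fromRel_adj] at h
  rcases h.2 with ⟨e, he, h1, h2⟩ | ⟨e, he, h1, h2⟩
  · exact ⟨e.1, e.2, he, Or.inl ⟨h1, h2⟩⟩
  · exact ⟨e.1, e.2, he, Or.inr ⟨h2, h1⟩⟩

lemma KL {H : Finset (Edge n)} {τ : Equiv.Perm (Fin n)}
    (hmc : ∀ e ∈ H, ∃ ν : Equiv.Perm (Fin n), pm ν ⊆ H ∧ e ∈ pm ν)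
    (hτ : pm τ ⊆ H) (w0 : Fin n ⊕ Fin n) {x y : Fin n}
    (hx : (graphOn H).Reachable w0 (inl x)) (hy : (graphOn H).Reachable w0 (inr y)) :
    ∃ μ : Fin n → Fin n, Function.Injective μ ∧
      ∀ i, (graphOn H).Reachable w0 (inl i) → i ≠ x →
        ((i, μ i) ∈ H ∧ (graphOn H).Reachable w0 (inr (μ i)) ∧ μ i ≠ y) := by
  classical
  set L : Finset (Fin n) :=
    Finset.univ.filter (fun i => (graphOn H).Reachable w0 (inl i)) with hL
  set R : Finset (Fin n) :=
    Finset.univ.filter (fun j => (graphOn H).Reachable w0 (inr j)) with hR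
  have hmemL : ∀ i, i ∈ L ↔ (graphOn H).Reachable w0 (inl i) := by
    intro i; simp [hL]
  have hmemR : ∀ j, j ∈ R ↔ (graphOn H).Reachable w0 (inr j) := by
    intro j; simp [hR]
  have hedgeLR : ∀ i j, (i, j) ∈ H → (i ∈ L ↔ j ∈ R) := by
    intro i j hij
    rw [hmemL, hmemR]
    have := reach_of_mem hij
    exact ⟨fun h => h.trans this, fun h => h.trans this.symm⟩
  have hLR : ∀ i ∈ L, τ i ∈ R := fun i hi =>
    (hedgeLR i (τ i) (sigma_edge_mem (σ := τ) hτ i)).mp hi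
  have hRimg : R = L.image τ := by
    ext j
    rw [Finset.mem_image]
    constructor
    · intro hj
      refine ⟨τ⁻¹ j, ?_, Equiv.apply_symm_apply τ j⟩
      have hedge : (τ⁻¹ j, j) ∈ H := by
        have := sigma_edge_mem (σ := τ) hτ (τ⁻¹ j)
        rwa [Equiv.Perm.coe_inv, Equiv.apply_symm_apply] at this
      exact (hedgeLR _ _ hedge).mpr hj
    · rintro ⟨i, hi, rfl⟩
      exact hLR i hi
  have hcardLR : L.card = R.card := by
    rw [hRimg, Finset.card_image_of_injective _ τ.injective]
  have hxL : x ∈ L := (hmemL x).mpr hx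
  have hyR : y ∈ R := (hmemR y).mpr hy
  set nbr : Fin n → Finset (Fin n) :=
    fun i => (R.erase y).filter (fun j => (i, j) ∈ H) with hnbr
  set t : Fin n → Finset (Fin n) :=
    fun i => if i ∈ L.erase x then nbr i else (R.erase y)ᶜ with ht
  have claim1 : ∀ s1 : Finset (Fin n), s1 ⊆ L.erase x →
      s1.card ≤ (s1.biUnion nbr).card := by
    intro s1 hs1
    have hs1L : s1 ⊆ L := hs1.trans (Finset.erase_subset _ _)
    set Nfull : Finset (Fin n) :=
      s1.biUnion (fun i => R.filter (fun j => (i, j) ∈ H)) with hNfull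
    have hbU : s1.biUnion nbr = Nfull.erase y := by
      ext j
      simp only [hNfull, hnbr, Finset.mem_biUnion, Finset.mem_erase, Finset.mem_filter]
      tauto
    have hts1 : s1.image τ ⊆ Nfull := by
      intro j hj
      rw [Finset.mem_image] at hj
      obtain ⟨i, hi, rfl⟩ := hj
      rw [hNfull, Finset.mem_biUnion]
      exact ⟨i, hi, Finset.mem_filter.mpr ⟨hLR i (hs1L hi), sigma_edge_mem (σ := τ) hτ i⟩⟩
    have h1 : s1.card ≤ Nfull.card := by
      calc s1.card = (s1.image τ).card := (Finset.card_image_of_injective _ τ.injective).symm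
        _ ≤ Nfull.card := Finset.card_le_card hts1
    rcases Nat.eq_or_lt_of_le h1 with heq | hlt
    · -- tight case: s1 must be empty
      rcases s1.eq_empty_or_nonempty with rfl | ⟨i₁, hi₁⟩
      · simp
      exfalso
      have himg : s1.image τ = Nfull :=
        Finset.eq_of_subset_of_card_le hts1
          (by rw [Finset.card_image_of_injective _ τ.injective]; omega)
      set good : (Fin n ⊕ Fin n) → Prop := Sum.elim (· ∈ s1) (· ∈ Nfull) with hgood
      have hclosedAdj : ∀ p q, (graphOn H).Adj p q → good p → good q := by
        intro p q hpq hp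
        obtain ⟨i, j, hij, hc⟩ := adj_graphOn_cases hpq
        rcases hc with ⟨rfl, rfl⟩ | ⟨rfl, rfl⟩
        · -- p = inl i, q = inr j
          have hi : i ∈ s1 := hp
          show j ∈ Nfull
          rw [hNfull, Finset.mem_biUnion]
          refine ⟨i, hi, Finset.mem_filter.mpr ⟨?_, hij⟩⟩
          exact (hedgeLR i j hij).mp (hs1L hi)
        · -- p = inr j, q = inl i
          have hj : j ∈ Nfull := hp
          show i ∈ s1
          obtain ⟨ν, hνH, hνij⟩ := hmc _ hij
          have hνj : ν i = j := mem_pm.mp hνij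
          have hνs1 : s1.image ν ⊆ Nfull := by
            intro j' hj'
            rw [Finset.mem_image] at hj'
            obtain ⟨i', hi', rfl⟩ := hj'
            rw [hNfull, Finset.mem_biUnion]
            refine ⟨i', hi', Finset.mem_filter.mpr ⟨?_, sigma_edge_mem (σ := ν) hνH i'⟩⟩
            exact (hedgeLR i' (ν i') (sigma_edge_mem (σ := ν) hνH i')).mp (hs1L hi')
          have himgν : s1.image ν = Nfull :=
            Finset.eq_of_subset_of_card_le hνs1
              (by rw [Finset.card_image_of_injective _ ν.injective]; omega)
          have : j ∈ s1.image ν := himgν ▸ hj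
          rw [Finset.mem_image] at this
          obtain ⟨i'', hi'', hνi''⟩ := this
          have : i'' = i := ν.injective (by rw [hνi'', hνj])
          exact this ▸ hi''
      have hclosedW : ∀ (p q : Fin n ⊕ Fin n) (w : (graphOn H).Walk p q), good p → good q := by
        intro p q w
        induction w with
        | nil => exact id
        | cons ha _ ih => intro hp; exact ih (hclosedAdj _ _ ha hp)
      have hclosedR : ∀ p q, (graphOn H).Reachable p q → good p → good q := by
        intro p q hpq hp
        obtain ⟨w⟩ := hpq
        exact hclosedW p q w hp
      have hgx : good (inl x) := by
        refine hclosedR (inl i₁) (inl x) ?_ hi₁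
        have h1 : (graphOn H).Reachable w0 (inl i₁) := (hmemL i₁).mp (hs1L hi₁)
        exact h1.symm.trans hx
      have : x ∈ s1 := hgx
      exact absurd (Finset.mem_erase.mp (hs1 this)).1 (by simp)
    · have hpred : Nfull.card - 1 ≤ (Nfull.erase y).card := Finset.pred_card_le_card_erase
      rw [hbU]
      omega
  have hall : ∀ s : Finset (Fin n), s.card ≤ (s.biUnion t).card := by
    intro s
    set s1 := s.filter (· ∈ L.erase x) with hs1def
    set s2 := s.filter (fun i => i ∉ L.erase x) with hs2def
    have hsplit : s1.card + s2.card = s.card :=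
      Finset.card_filter_add_card_filter_not _
    have hs1sub : s1 ⊆ L.erase x := fun i hi => (Finset.mem_filter.mp hi).2
    have hsubU : s1.biUnion nbr ⊆ s.biUnion t := by
      intro j hj
      rw [Finset.mem_biUnion] at hj ⊢
      obtain ⟨i, hi, hji⟩ := hj
      refine ⟨i, (Finset.mem_filter.mp hi).1, ?_⟩
      rw [ht]
      simp only [if_pos (hs1sub hi)]
      exact hji
    rcases s2.eq_empty_or_nonempty with hs2e | ⟨i₂, hi₂⟩
    · have : s1.card = s.card := by rw [← hsplit, hs2e]; simp
      calc s.card = s1.card := this.symm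
        _ ≤ (s1.biUnion nbr).card := claim1 s1 hs1sub
        _ ≤ (s.biUnion t).card := Finset.card_le_card hsubU
    · have hcomp : (R.erase y)ᶜ ⊆ s.biUnion t := by
        intro j hj
        rw [Finset.mem_biUnion]
        refine ⟨i₂, (Finset.mem_filter.mp hi₂).1, ?_⟩
        rw [ht]
        simp only [if_neg (Finset.mem_filter.mp hi₂).2]
        exact hj
      have hUsub : (s1.biUnion nbr) ∪ (R.erase y)ᶜ ⊆ s.biUnion t :=
        Finset.union_subset hsubU hcomp
      have hdisj : Disjoint (s1.biUnion nbr) ((R.erase y)ᶜ) := by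
        rw [Finset.disjoint_left]
        intro j hj hjc
        rw [Finset.mem_biUnion] at hj
        obtain ⟨i, _, hji⟩ := hj
        rw [hnbr] at hji
        exact (Finset.mem_compl.mp hjc) (Finset.mem_filter.mp hji).1
      have hcard1 : s1.card ≤ (s1.biUnion nbr).card := claim1 s1 hs1sub
      have hcard2 : s2.card ≤ ((R.erase y)ᶜ).card := by
        have hsub2 : s2 ⊆ (L.erase x)ᶜ := by
          intro i hi
          rw [Finset.mem_compl]
          exact (Finset.mem_filter.mp hi).2
        have h2 := Finset.card_le_card hsub2
        have e1 : ((L.erase x)ᶜ).card = Fintype.card (Fin n) - (L.erase x).card :=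
          Finset.card_compl _
        have e2 : ((R.erase y)ᶜ).card = Fintype.card (Fin n) - (R.erase y).card :=
          Finset.card_compl _
        have e3 : (L.erase x).card = L.card - 1 := Finset.card_erase_of_mem hxL
        have e4 : (R.erase y).card = R.card - 1 := Finset.card_erase_of_mem hyR
        have e5 : L.card ≤ Fintype.card (Fin n) := Finset.card_le_univ L
        have e6 : 1 ≤ L.card := Finset.card_pos.mpr ⟨x, hxL⟩
        omega
      calc s.card = s1.card + s2.card := hsplit.symm
        _ ≤ (s1.biUnion nbr).card + ((R.erase y)ᶜ).card := Nat.add_le_add hcard1 hcard2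
        _ = ((s1.biUnion nbr) ∪ (R.erase y)ᶜ).card := (Finset.card_union_of_disjoint hdisj).symm
        _ ≤ (s.biUnion t).card := Finset.card_le_card hUsub
  obtain ⟨μ, hinj, hμ⟩ := (Finset.all_card_le_biUnion_card_iff_exists_injective t).mp hall
  refine ⟨μ, hinj, ?_⟩
  intro i hreach hix
  have hiL : i ∈ L.erase x := Finset.mem_erase.mpr ⟨hix, (hmemL i).mpr hreach⟩
  have := hμ i
  rw [ht] at this
  simp only [if_pos hiL] at this
  rw [hnbr, Finset.mem_filter, Finset.mem_erase] at this
  exact ⟨this.2, (hmemR _).mp this.1.2, this.1.1⟩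

end KL

/-! ### Fact 2 -/

section Fact2

open SimpleGraph Sum Equiv

variable {n : ℕ}

lemma fact2 {G H : Finset (Edge n)} (hGmc : matchingCovered G) (hHmc : matchingCovered H)
    (hsub : H ⊆ G) (hne : H ≠ G)
    (hmax : ∀ H', H ⊆ H' → H' ⊆ G → matchingCovered H' → H' = H ∨ H' = G) :
    numComponents G + (G \ H).card ≤ numComponents H + 1 := by
  classical
  set D := G \ H with hDdef
  have hDG : ∀ d ∈ D, d ∈ G := fun d hd => (Finset.mem_sdiff.mp hd).1
  have hDH : ∀ d ∈ D, d ∉ H := fun d hd => (Finset.mem_sdiff.mp hd).2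
  -- forcing
  have hforce : ∀ ν : Equiv.Perm (Fin n), pm ν ⊆ G → (∃ d ∈ D, d ∈ pm ν) → D ⊆ pm ν := by
    rintro ν hν ⟨d, hdD, hdν⟩
    have hH' := mc_union_pm hHmc ν
    rcases hmax (H ∪ pm ν) Finset.subset_union_left (Finset.union_subset hsub hν) hH' with h | h
    · exfalso
      have hd : d ∈ H := by
        have : d ∈ H ∪ pm ν := Finset.mem_union_right _ hdν
        rwa [h] at this
      exact hDH d hdD hd
    · intro d' hd'
      have : d' ∈ H ∪ pm ν := by rw [h]; exact hDG d' hd'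
      rcases Finset.mem_union.mp this with h' | h'
      · exact absurd h' (hDH d' hd')
      · exact h'
  rw [mc_iff] at hGmc hHmc
  obtain ⟨τ, hτH⟩ := hHmc.1
  have hDne : D.Nonempty := by
    rw [hDdef, Finset.sdiff_nonempty]
    intro h
    exact hne (Finset.Subset.antisymm hsub h)
  obtain ⟨d₀, hd₀⟩ := hDne
  obtain ⟨σ, hσG, hd₀σ⟩ := hGmc.2 d₀ (hDG d₀ hd₀)
  have hDσ : D ⊆ pm σ := hforce σ hσG ⟨d₀, hd₀, hd₀σ⟩
  have hDc : ∀ d ∈ D, d = (d.1, σ d.1) := by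
    intro d hd
    have := mem_pm'.mp (hDσ hd)
    exact Prod.ext rfl this.symm
  have hGnotD : ∀ i : Fin n, (i, σ i) ∉ D → (i, σ i) ∈ H := by
    intro i hi
    have hG' : (i, σ i) ∈ G := sigma_edge_mem hσG i
    by_contra hH'
    exact hi (Finset.mem_sdiff.mpr ⟨hG', hH'⟩)
  -- all left endpoints of D lie on a single cycle of τ⁻¹ * σ
  have hsame : ∀ i, (i, σ i) ∈ D → ∀ i', (i', σ i') ∈ D → (τ⁻¹ * σ).SameCycle i i' := by
    intro i hi i' hi'
    by_contra hns
    set N := τ * (τ⁻¹ * σ).cycleOf i with hN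
    have hNapp : ∀ j, N j = if (τ⁻¹ * σ).SameCycle i j then σ j else τ j := by
      intro j
      rw [hN, Equiv.Perm.mul_apply, Equiv.Perm.cycleOf_apply]
      split
      · exact tau_apply_f σ τ j
      · rfl
    have hNG : pm N ⊆ G := by
      intro e he
      have h1 : N e.1 = e.2 := mem_pm'.mp he
      have h2 : e = (e.1, N e.1) := Prod.ext rfl h1.symm
      rw [h2, hNapp]
      split
      · exact sigma_edge_mem hσG e.1
      · exact hsub (sigma_edge_mem (σ := τ) hτH e.1)
    have hiN : (i, σ i) ∈ pm N := by
      rw [mem_pm, hNapp, if_pos (Equiv.Perm.SameCycle.refl _ i)]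
    have hall := hforce N hNG ⟨_, hi, hiN⟩
    have hN' : N i' = σ i' := mem_pm.mp (hall hi')
    rw [hNapp, if_neg hns] at hN'
    exact hDH _ hi' (hτH (mem_pm.mpr hN'))
  -- the set A of left endpoints
  set A := D.image (fun d => (inl d.1 : Fin n ⊕ Fin n)) with hA
  have hAcard : A.card = D.card := by
    rw [hA]
    apply Finset.card_image_of_injOn
    intro d hd d' hd' hdd'
    rw [hDc d hd, hDc d' hd']
    have : d.1 = d'.1 := by simpa using hdd'
    rw [this]
  -- pairwise reachability in G
  have hreachG : ∀ a ∈ A, ∀ b ∈ A, (graphOn G).Reachable a b := by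
    intro p hp q hq
    rw [hA, Finset.mem_image] at hp hq
    obtain ⟨d, hd, rfl⟩ := hp
    obtain ⟨d', hd', rfl⟩ := hq
    have hsc := hsame d.1 (by rw [← hDc d hd]; exact hd) d'.1 (by rw [← hDc d' hd']; exact hd')
    obtain ⟨k, -, hk⟩ := hsc.exists_pow_eq'
    have := chainG hσG (hτH.trans hsub) d.1 k
    rwa [hk] at this
  -- pairwise non-reachability in H
  have hnreachH : ∀ p ∈ A, ∀ q ∈ A, p ≠ q → ¬ (graphOn H).Reachable p q := by
    intro p hp q hq hpq hreach'
    rw [hA, Finset.mem_image] at hp hq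
    obtain ⟨d, hdD, rfl⟩ := hp
    obtain ⟨d', hd'D, rfl⟩ := hq
    have hd1 : d.1 ≠ d'.1 := fun h => hpq (by rw [h])
    -- minimal distance same-component pair
    have hQ : ∃ tt : ℕ, 0 < tt ∧ ∃ b b' : Fin n, (b, σ b) ∈ D ∧ (b', σ b') ∈ D ∧ b ≠ b' ∧
        (graphOn H).Reachable (inl b) (inl b') ∧ ((τ⁻¹ * σ) ^ tt) b = b' := by
      have hsc := hsame d.1 (by rw [← hDc d hdD]; exact hdD) d'.1
        (by rw [← hDc d' hd'D]; exact hd'D)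
      obtain ⟨k, -, hk⟩ := hsc.exists_pow_eq'
      have hk0 : k ≠ 0 := by
        intro h0
        rw [h0, pow_zero_apply] at hk
        exact hd1 hk
      exact ⟨k, Nat.pos_of_ne_zero hk0, d.1, d'.1, (by rw [← hDc d hdD]; exact hdD),
        (by rw [← hDc d' hd'D]; exact hd'D), hd1, hreach', hk⟩
    set t := Nat.find hQ with htdef
    obtain ⟨ht0, a, a', haD, ha'D, hane, hreachaa', hfa⟩ := Nat.find_spec hQ
    -- no return within t steps
    have hnoret : ∀ l, 0 < l → l ≤ t → ((τ⁻¹ * σ) ^ l) a ≠ a := by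
      intro l hl0 hlt hla
      rcases Nat.eq_or_lt_of_le hlt with heq | hlt'
      · rw [heq] at hla
        rw [hla] at hfa
        exact hane hfa
      · refine Nat.find_min hQ (show t - l < t by omega) ?_
        refine ⟨by omega, a, a', haD, ha'D, hane, hreachaa', ?_⟩
        have h1 : ((τ⁻¹ * σ) ^ (t - l)) (((τ⁻¹ * σ) ^ l) a) = ((τ⁻¹ * σ) ^ t) a := by
          rw [← Equiv.Perm.mul_apply, ← pow_add]
          congr 2
          omega
        rw [hla] at h1
        rw [h1, hfa]
    -- distinctness from f^t a
    have hdist : ∀ l, l < t → ((τ⁻¹ * σ) ^ l) a ≠ ((τ⁻¹ * σ) ^ t) a := by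
      intro l hl hla
      have h1 : ((τ⁻¹ * σ) ^ (t - l)) (((τ⁻¹ * σ) ^ l) a) = ((τ⁻¹ * σ) ^ t) a := by
        rw [← Equiv.Perm.mul_apply, ← pow_add]
        congr 2
        omega
      rw [← hla] at h1
      have h2 : ((τ⁻¹ * σ) ^ (t - l)) (((τ⁻¹ * σ) ^ l) a) =
          ((τ⁻¹ * σ) ^ l) (((τ⁻¹ * σ) ^ (t - l)) a) := by
        rw [← Equiv.Perm.mul_apply, ← Equiv.Perm.mul_apply, ← pow_add, ← pow_add, Nat.add_comm]
      rw [h2] at h1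
      have h3 : ((τ⁻¹ * σ) ^ (t - l)) a = a := ((τ⁻¹ * σ) ^ l).injective h1
      exact hnoret (t - l) (by omega) (by omega) h3
    -- strictly-between D-lefts are in other components
    have hbetween : ∀ l, 0 < l → l < t → (((τ⁻¹ * σ) ^ l) a, σ (((τ⁻¹ * σ) ^ l) a)) ∈ D →
        ¬ (graphOn H).Reachable (inl a) (inl (((τ⁻¹ * σ) ^ l) a)) := by
      intro l hl0 hlt hDl hr
      refine Nat.find_min hQ hlt ⟨hl0, a, ((τ⁻¹ * σ) ^ l) a, haD, hDl, ?_, hr, rfl⟩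
      exact fun h => hnoret l hl0 (le_of_lt hlt) h.symm
    -- last D-left before a'
    set lp := Nat.findGreatest (fun l => (((τ⁻¹ * σ) ^ l) a, σ (((τ⁻¹ * σ) ^ l) a)) ∈ D)
      (t - 1) with hlpdef
    have hlpD : (((τ⁻¹ * σ) ^ lp) a, σ (((τ⁻¹ * σ) ^ lp) a)) ∈ D :=
      Nat.findGreatest_spec
        (P := fun l => (((τ⁻¹ * σ) ^ l) a, σ (((τ⁻¹ * σ) ^ l) a)) ∈ D) (m := 0) (n := t - 1)
        (by omega)
        (by show (((τ⁻¹ * σ) ^ 0) a, σ (((τ⁻¹ * σ) ^ 0) a)) ∈ D; rw [pow_zero_apply]; exact haD)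
    have hlple : lp ≤ t - 1 := Nat.findGreatest_le _
    have hedgeH : ∀ j, lp < j → j < t → (((τ⁻¹ * σ) ^ j) a, σ (((τ⁻¹ * σ) ^ j) a)) ∈ H := by
      intro j h1 h2
      apply hGnotD
      exact Nat.findGreatest_is_greatest
        (P := fun l => (((τ⁻¹ * σ) ^ l) a, σ (((τ⁻¹ * σ) ^ l) a)) ∈ D) h1 (by omega)
    -- chain from lp+1 up to t (inside H)
    have hchain1 : (graphOn H).Reachable (inl (((τ⁻¹ * σ) ^ (lp + 1)) a))
        (inl (((τ⁻¹ * σ) ^ t) a)) :=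
      chainH hτH a (lp + 1) t (by omega) (fun j hj1 hj2 => hedgeH j (by omega) hj2)
    have hτnext := reach_of_mem (tau_edge_next (σ := σ) hτH a lp)
    have hyW : (graphOn H).Reachable (inl a) (inr (σ (((τ⁻¹ * σ) ^ lp) a))) := by
      refine hreachaa'.trans ?_
      rw [← hfa]
      exact hchain1.symm.trans hτnext
    obtain ⟨μ, hμinj, hμ⟩ := KL hHmc.2 hτH (inl a) (Reachable.refl _) hyW
    -- the σ-segment
    set S := (Finset.range (lp + 1)).image (fun l => ((τ⁻¹ * σ) ^ l) a) with hS
    have hmemS : ∀ i, i ∈ S ↔ ∃ l, l ≤ lp ∧ ((τ⁻¹ * σ) ^ l) a = i := by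
      intro i
      rw [hS, Finset.mem_image]
      constructor
      · rintro ⟨l, hl, rfl⟩
        exact ⟨l, Nat.lt_succ_iff.mp (Finset.mem_range.mp hl), rfl⟩
      · rintro ⟨l, hl, rfl⟩
        exact ⟨l, Finset.mem_range.mpr (Nat.lt_succ_iff.mpr hl), rfl⟩
    have haS : a ∈ S := (hmemS a).mpr ⟨0, Nat.zero_le _, pow_zero_apply _ _⟩
    -- K1 : interior segment lefts are not in W
    have hK1 : ∀ l, 0 < l → l ≤ lp → ¬ (graphOn H).Reachable (inl a)
        (inl (((τ⁻¹ * σ) ^ l) a)) := by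
      intro l hl0 hllp hr
      have hEx : ∃ j, l ≤ j ∧ j ≤ lp ∧ (((τ⁻¹ * σ) ^ j) a, σ (((τ⁻¹ * σ) ^ j) a)) ∈ D :=
        ⟨lp, hllp, le_refl _, hlpD⟩
      set lb := Nat.find hEx with hlbdef
      obtain ⟨hlb1, hlb2, hlbD⟩ := Nat.find_spec hEx
      have hchain2 : (graphOn H).Reachable (inl (((τ⁻¹ * σ) ^ l) a))
          (inl (((τ⁻¹ * σ) ^ lb) a)) := by
        refine chainH hτH a l lb hlb1 (fun j hj1 hj2 => ?_)
        apply hGnotD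
        intro hD'
        exact Nat.find_min hEx hj2 ⟨hj1, by omega, hD'⟩
      exact hbetween lb (by omega) (by omega) hlbD (hr.trans hchain2)
    -- K3 : interior segment rights are not in W
    have hK3 : ∀ l, l < lp → ¬ (graphOn H).Reachable (inl a)
        (inr (σ (((τ⁻¹ * σ) ^ l) a))) := by
      intro l hl hr
      have hedge := reach_of_mem (tau_edge_next (σ := σ) hτH a l)
      exact hK1 (l + 1) (by omega) (by omega) (hr.trans hedge.symm)
    -- K4
    have hK4 : (graphOn H).Reachable (inl a) (inl (((τ⁻¹ * σ) ^ (lp + 1)) a)) := by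
      refine hreachaa'.trans ?_
      rw [← hfa]
      exact hchain1.symm
    -- the new permutation
    set ξ : Fin n → Fin n := fun i =>
      if i ∈ S then σ i
      else if (graphOn H).Reachable (inl a) (inl i) then μ i
      else τ i with hξ
    have hξS : ∀ i ∈ S, ξ i = σ i := fun i hi => by rw [hξ]; simp only [if_pos hi]
    have hξμ : ∀ i, i ∉ S → (graphOn H).Reachable (inl a) (inl i) → ξ i = μ i := by
      intro i h1 h2
      rw [hξ]
      simp only [if_neg h1, if_pos h2]
    have hξτ : ∀ i, i ∉ S → ¬ (graphOn H).Reachable (inl a) (inl i) → ξ i = τ i := by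
      intro i h1 h2
      rw [hξ]
      simp only [if_neg h1, if_neg h2]
    have hμprops : ∀ i, i ∉ S → (graphOn H).Reachable (inl a) (inl i) →
        ((i, μ i) ∈ H ∧ (graphOn H).Reachable (inl a) (inr (μ i)) ∧
          μ i ≠ σ (((τ⁻¹ * σ) ^ lp) a)) := by
      intro i h1 h2
      exact hμ i h2 (fun h => h1 (h ▸ haS))
    -- injectивity helper for the (S, non-S) mixed case
    have hmixed : ∀ i i', i ∈ S → i' ∉ S → ξ i ≠ ξ i' := by
      intro i i' hiS hi'S heq
      obtain ⟨l, hl, rfl⟩ := (hmemS i).mp hiS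
      rw [hξS _ hiS] at heq
      by_cases hr : (graphOn H).Reachable (inl a) (inl i')
      · rw [hξμ _ hi'S hr] at heq
        obtain ⟨hμH, hμR, hμy⟩ := hμprops i' hi'S hr
        rcases Nat.eq_or_lt_of_le hl with heql | hltl
        · rw [heql] at heq
          exact hμy heq.symm
        · rw [← heq] at hμR
          exact hK3 l hltl hμR
      · rw [hξτ _ hi'S hr] at heq
        have hτeq : τ (((τ⁻¹ * σ) ^ (l + 1)) a) = σ (((τ⁻¹ * σ) ^ l) a) := by
          rw [pow_succ_apply, tau_apply_f]
        have hi'eq : i' = ((τ⁻¹ * σ) ^ (l + 1)) a := τ.injective (by rw [hτeq, heq])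
        rcases Nat.eq_or_lt_of_le hl with heql | hltl
        · rw [heql] at hi'eq
          rw [hi'eq] at hr
          exact hr hK4
        · exact hi'S (hi'eq ▸ (hmemS _).mpr ⟨l + 1, by omega, rfl⟩)
    have hξinj : Function.Injective ξ := by
      intro i i' heq
      by_cases hiS : i ∈ S <;> by_cases hi'S : i' ∈ S
      · rw [hξS _ hiS, hξS _ hi'S] at heq
        exact σ.injective heq
      · exact absurd heq (hmixed i i' hiS hi'S)
      · exact absurd heq.symm (hmixed i' i hi'S hiS)
      · by_cases hr : (graphOn H).Reachable (inl a) (inl i) <;>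
          by_cases hr' : (graphOn H).Reachable (inl a) (inl i')
        · rw [hξμ _ hiS hr, hξμ _ hi'S hr'] at heq
          exact hμinj heq
        · rw [hξμ _ hiS hr, hξτ _ hi'S hr'] at heq
          obtain ⟨hμH, hμR, -⟩ := hμprops i hiS hr
          rw [heq] at hμR
          have hτe := reach_of_mem (sigma_edge_mem (σ := τ) hτH i')
          exact absurd (hμR.trans hτe.symm) hr'
        · rw [hξτ _ hiS hr, hξμ _ hi'S hr'] at heq
          obtain ⟨hμH, hμR, -⟩ := hμprops i' hi'S hr'
          rw [← heq] at hμR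
          have hτe := reach_of_mem (sigma_edge_mem (σ := τ) hτH i)
          exact absurd (hμR.trans hτe.symm) hr
        · rw [hξτ _ hiS hr, hξτ _ hi'S hr'] at heq
          exact τ.injective heq
    set ξp := Equiv.ofBijective ξ (Finite.injective_iff_bijective.mp hξinj) with hξp
    have hξpapp : ∀ i, ξp i = ξ i := fun i => rfl
    -- pm ξp ⊆ G
    have hξG : pm ξp ⊆ G := by
      intro e he
      have h1 : ξ e.1 = e.2 := mem_pm'.mp he
      have h2 : e = (e.1, ξ e.1) := Prod.ext rfl h1.symm
      rw [h2]
      by_cases hS1 : e.1 ∈ S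
      · rw [hξS _ hS1]
        exact sigma_edge_mem hσG e.1
      · by_cases hr : (graphOn H).Reachable (inl a) (inl e.1)
        · rw [hξμ _ hS1 hr]
          exact hsub (hμprops e.1 hS1 hr).1
        · rw [hξτ _ hS1 hr]
          exact hsub (sigma_edge_mem (σ := τ) hτH e.1)
    -- (a, σ a) ∈ pm ξp
    have haξ : (a, σ a) ∈ pm ξp := by
      rw [mem_pm]
      show ξ a = σ a
      exact hξS a haS
    -- (a', σ a') ∉ pm ξp
    have ha'S : a' ∉ S := by
      intro hS'
      obtain ⟨l, hl, hleq⟩ := (hmemS a').mp hS'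
      rw [← hfa] at hleq
      exact hdist l (by omega) hleq
    have ha'ξ : (a', σ a') ∉ pm ξp := by
      rw [mem_pm]
      show ¬ ξ a' = σ a'
      rw [hξμ _ ha'S hreachaa']
      intro heq
      obtain ⟨hμH, -, -⟩ := hμprops a' ha'S hreachaa'
      rw [heq] at hμH
      exact hDH _ ha'D hμH
    have hforceξ := hforce ξp hξG ⟨(a, σ a), haD, haξ⟩
    exact ha'ξ (hforceξ ha'D)
  -- conclude by component counting
  have := ncomp_lower (graphOn_mono hsub) A hreachG hnreachH
  rw [hAcard] at this
  exact this

end Fact2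

end Stmt8Aux


set_option maxHeartbeats 1000000 in
/-- if `G ⊆ K_{n,n}` is matching-covered and is not itself a perfect matching,
then there is a matching-covered `H ⊆ G` with `χ(H) = χ(G) − 1`. -/
theorem stmt8 (n : ℕ) (G : Finset (Edge n))
    (hG : matchingCovered G) (hnpm : ¬ isPM G) :
    ∃ H ⊆ G, matchingCovered H ∧ cyclo H = cyclo G - 1 := by
  classical
  obtain ⟨τ₀, hτ₀⟩ := (Stmt8Aux.mc_iff.mp hG).1
  have hpm₀ : matchingCovered (Stmt8Aux.pm τ₀) :=
    Stmt8Aux.mc_iff.mpr ⟨⟨τ₀, Finset.Subset.refl _⟩,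
      fun e he => ⟨τ₀, Finset.Subset.refl _, he⟩⟩
  have hτ₀ne : Stmt8Aux.pm τ₀ ≠ G := fun h => hnpm (h ▸ Stmt8Aux.isPM_pm τ₀)
  set 𝒮 := (G.powerset).filter (fun H => matchingCovered H ∧ H ≠ G) with hSdef
  have hSne : 𝒮.Nonempty := by
    refine ⟨Stmt8Aux.pm τ₀, ?_⟩
    rw [hSdef, Finset.mem_filter, Finset.mem_powerset]
    exact ⟨hτ₀, hpm₀, hτ₀ne⟩
  obtain ⟨H, hH𝒮, hHmax⟩ := Finset.exists_max_image 𝒮 Finset.card hSne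
  rw [hSdef, Finset.mem_filter, Finset.mem_powerset] at hH𝒮
  obtain ⟨hHsub, hHmc, hHne⟩ := hH𝒮
  have hmax : ∀ H', H ⊆ H' → H' ⊆ G → matchingCovered H' → H' = H ∨ H' = G := by
    intro H' h1 h2 h3
    by_cases h4 : H' = G
    · exact Or.inr h4
    · left
      have hH'𝒮 : H' ∈ 𝒮 := by
        rw [hSdef, Finset.mem_filter, Finset.mem_powerset]
        exact ⟨h2, h3, h4⟩
      exact (Finset.eq_of_subset_of_card_le h1 (hHmax H' hH'𝒮)).symm
  have h1 := Stmt8Aux.fact1 hG hHmc hHsub hHne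
  have h2 := Stmt8Aux.fact2 hG hHmc hHsub hHne hmax
  have heq : numComponents H + 1 = numComponents G + (G \ H).card := le_antisymm h1 h2
  have hc : H.card + (G \ H).card = G.card := by
    rw [Nat.add_comm]
    exact Finset.card_sdiff_add_card_eq_card hHsub
  refine ⟨H, hHsub, hHmc, ?_⟩
  unfold cyclo
  have c1 : (H.card : ℤ) + (G \ H).card = G.card := by exact_mod_cast hc
  have c2 : (numComponents H : ℤ) + 1 = numComponents G + (G \ H).card := by exact_mod_cast heq
  linarith
end

section
/- For every Boolean function f: {0,1}^n → {0,1}, the minimal depth of an AND decision tree computing f is at least log base 3 of the number of monomials with nonzero coefficient in the unique real multilinear polynomial representing f. -/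
open Finset
open scoped Classical

/-- Decision trees whose internal nodes query a Boolean function of a subset of the bits. -/
inductive QTree (E : Type) : Type where
  | leaf : Bool → QTree E
  | node : Finset E → QTree E → QTree E → QTree E

/-- Depth of a generalized decision tree. -/
def QTree.depth {E : Type} : QTree E → ℕ
  | .leaf _ => 0
  | .node _ t0 t1 => max (QTree.depth t0) (QTree.depth t1) + 1

/-- Evaluation of an AND decision tree: each internal node queries `AND_S(x) = ∧_{i∈S} x i`. -/
noncomputable def QTree.andEval {E : Type} : QTree E → (E → Bool) → Bool
  | .leaf b, _ => b
  | .node S t0 t1, x =>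
      if ∀ e ∈ S, x e = true then QTree.andEval t1 x else QTree.andEval t0 x

noncomputable def chi {n : ℕ} (S : Finset (Fin n)) (x : Fin n → Bool) : ℝ :=
  ∏ i ∈ S, (if x i then (1 : ℝ) else 0)

lemma chi_eq {n : ℕ} (S : Finset (Fin n)) (x : Fin n → Bool) :
    chi S x = if ∀ i ∈ S, x i = true then 1 else 0 := by
  unfold chi
  split
  · next h => exact Finset.prod_eq_one (fun i hi => by simp [h i hi])
  · next h =>
    push_neg at h
    obtain ⟨i, hi, hxi⟩ := h
    exact Finset.prod_eq_zero hi (by simp [hxi])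

lemma chi_union {n : ℕ} (S T : Finset (Fin n)) (x : Fin n → Bool) :
    chi (S ∪ T) x = chi S x * chi T x := by
  rw [chi_eq, chi_eq, chi_eq]
  have h : (∀ i ∈ S ∪ T, x i = true) ↔
      ((∀ i ∈ S, x i = true) ∧ (∀ i ∈ T, x i = true)) := by
    simp [Finset.mem_union, or_imp, forall_and]
  rw [if_congr h rfl rfl]
  by_cases hS : ∀ i ∈ S, x i = true <;> by_cases hT : ∀ i ∈ T, x i = true
  · rw [if_pos ⟨hS, hT⟩, if_pos hS, if_pos hT]; norm_num
  · rw [if_neg (by tauto), if_neg hT]; norm_num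
  · rw [if_neg (by tauto), if_neg hS]; norm_num
  · rw [if_neg (by tauto), if_neg hS]; norm_num

noncomputable def mEval {n : ℕ} (b : Finset (Fin n) → ℝ) (x : Fin n → Bool) : ℝ :=
  ∑ S : Finset (Fin n), b S * chi S x

lemma zero_of_eval_zero {n : ℕ} (b : Finset (Fin n) → ℝ)
    (h : ∀ x, mEval b x = 0) : ∀ S, b S = 0 := by
  intro S
  induction S using Finset.strongInduction with
  | _ S ih =>
    have hx := h (fun i => decide (i ∈ S))
    unfold mEval at hx
    have hterm : ∀ T : Finset (Fin n), b T * chi T (fun i => decide (i ∈ S))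
        = if T ⊆ S then b T else 0 := by
      intro T
      rw [chi_eq]
      by_cases hTS : T ⊆ S
      · simp only [hTS, if_true]
        rw [if_pos]
        · ring
        · intro i hi; simp [hTS hi]
      · rw [if_neg, if_neg hTS]
        · ring
        · intro hall
          exact hTS (fun i hi => by simpa using hall i hi)
    rw [Finset.sum_congr rfl (fun T _ => hterm T), ← Finset.sum_filter] at hx
    have hfil : (Finset.univ.filter fun T : Finset (Fin n) => T ⊆ S) = S.powerset := by
      ext T; simp
    rw [hfil] at hx
    rw [Finset.sum_eq_single_of_mem S (Finset.mem_powerset_self S)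
      (fun T hT hTS => ih T (lt_of_le_of_ne (Finset.mem_powerset.mp hT) hTS))] at hx
    exact hx

noncomputable def mulM {n : ℕ} (S : Finset (Fin n)) (c : Finset (Fin n) → ℝ) :
    Finset (Fin n) → ℝ :=
  fun U => ∑ T ∈ Finset.univ.filter (fun T => S ∪ T = U), c T

lemma mulM_eval {n : ℕ} (S : Finset (Fin n)) (c : Finset (Fin n) → ℝ) (x : Fin n → Bool) :
    mEval (mulM S c) x = chi S x * mEval c x := by
  unfold mEval mulM
  rw [Finset.mul_sum]
  rw [← Finset.sum_fiberwise_of_maps_to (g := fun T : Finset (Fin n) => S ∪ T)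
      (t := (Finset.univ : Finset (Finset (Fin n))))
      (fun T _ => Finset.mem_univ _)
      (fun T => chi S x * (c T * chi T x))]
  apply Finset.sum_congr rfl
  intro U _
  rw [Finset.sum_mul]
  apply Finset.sum_congr rfl
  intro T hT
  rw [Finset.mem_filter] at hT
  rw [← hT.2, chi_union]
  ring

lemma mulM_support {n : ℕ} (S : Finset (Fin n)) (c : Finset (Fin n) → ℝ) :
    (Finset.univ.filter fun U => mulM S c U ≠ 0) ⊆
      (Finset.univ.filter fun T => c T ≠ 0).image (fun T => S ∪ T) := by
  intro U hU
  rw [Finset.mem_filter] at hU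
  unfold mulM at hU
  obtain ⟨T, hT, hcT⟩ := Finset.exists_ne_zero_of_sum_ne_zero hU.2
  rw [Finset.mem_filter] at hT
  exact Finset.mem_image.mpr ⟨T, Finset.mem_filter.mpr ⟨Finset.mem_univ _, hcT⟩, hT.2⟩

lemma tree_sparse {n : ℕ} (T : QTree (Fin n)) :
    ∃ b : Finset (Fin n) → ℝ,
      (∀ x, mEval b x = if T.andEval x then 1 else 0) ∧
      (Finset.univ.filter fun S => b S ≠ 0).card ≤ 3 ^ T.depth := by
  induction T with
  | leaf v =>
    refine ⟨fun S => if v = true ∧ S = ∅ then 1 else 0, ?_, ?_⟩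
    · intro x
      unfold mEval
      rw [Finset.sum_eq_single_of_mem ∅ (Finset.mem_univ _)]
      · cases v <;> simp [chi, QTree.andEval]
      · intro T _ hT
        simp [hT]
    · calc (Finset.univ.filter fun S : Finset (Fin n) =>
            (if v = true ∧ S = ∅ then (1:ℝ) else 0) ≠ 0).card
          ≤ ({∅} : Finset (Finset (Fin n))).card := by
            apply Finset.card_le_card
            intro S hS
            rw [Finset.mem_filter] at hS
            have : S = ∅ := by
              by_contra hne
              exact hS.2 (by simp [hne])
            simp [this]
      _ ≤ 3 ^ QTree.depth (.leaf v) := by simp [QTree.depth]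
  | node S t0 t1 ih0 ih1 =>
    obtain ⟨b0, hb0, hc0⟩ := ih0
    obtain ⟨b1, hb1, hc1⟩ := ih1
    refine ⟨fun U => mulM S b1 U + b0 U - mulM S b0 U, ?_, ?_⟩
    · intro x
      have heval : mEval (fun U => mulM S b1 U + b0 U - mulM S b0 U) x
          = mEval (mulM S b1) x + mEval b0 x - mEval (mulM S b0) x := by
        unfold mEval
        rw [Finset.sum_congr rfl (fun U _ => show
          (fun U => mulM S b1 U + b0 U - mulM S b0 U) U * chi U x
            = (mulM S b1 U * chi U x + b0 U * chi U x) - mulM S b0 U * chi U x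
          from by ring)]
        rw [Finset.sum_sub_distrib, Finset.sum_add_distrib]
      rw [heval, mulM_eval, mulM_eval, hb0, hb1, chi_eq]
      by_cases h : ∀ e ∈ S, x e = true
      · simp only [if_pos h]
        rw [show (QTree.node S t0 t1).andEval x = t1.andEval x from by
          rw [QTree.andEval, if_pos h]]
        ring
      · simp only [if_neg h]
        rw [show (QTree.node S t0 t1).andEval x = t0.andEval x from by
          rw [QTree.andEval, if_neg h]]
        simp
    · have hsub : (Finset.univ.filter fun U =>
          (mulM S b1 U + b0 U - mulM S b0 U) ≠ 0) ⊆
          (Finset.univ.filter fun U => mulM S b1 U ≠ 0) ∪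
          (Finset.univ.filter fun U => b0 U ≠ 0) ∪
          (Finset.univ.filter fun U => mulM S b0 U ≠ 0) := by
        intro U hU
        rw [Finset.mem_filter] at hU
        simp only [Finset.mem_union, Finset.mem_filter, Finset.mem_univ, true_and]
        by_contra hc
        push_neg at hc
        exact hU.2 (by rw [hc.1.1, hc.1.2, hc.2]; ring)
      have hA : (Finset.univ.filter fun U => mulM S b1 U ≠ 0).card ≤ 3 ^ t1.depth :=
        le_trans (Finset.card_le_card (mulM_support S b1))
          (le_trans Finset.card_image_le hc1)
      have hB : (Finset.univ.filter fun U => mulM S b0 U ≠ 0).card ≤ 3 ^ t0.depth :=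
        le_trans (Finset.card_le_card (mulM_support S b0))
          (le_trans Finset.card_image_le hc0)
      have hcard := Finset.card_le_card hsub
      have hu1 := Finset.card_union_le
        ((Finset.univ.filter fun U => mulM S b1 U ≠ 0) ∪
          (Finset.univ.filter fun U => b0 U ≠ 0))
        (Finset.univ.filter fun U => mulM S b0 U ≠ 0)
      have hu2 := Finset.card_union_le
        (Finset.univ.filter fun U => mulM S b1 U ≠ 0)
        (Finset.univ.filter fun U => b0 U ≠ 0)
      show (Finset.univ.filter fun U =>
          mulM S b1 U + b0 U - mulM S b0 U ≠ 0).card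
          ≤ 3 ^ QTree.depth (QTree.node S t0 t1)
      have hd : QTree.depth (QTree.node S t0 t1) = max t0.depth t1.depth + 1 := rfl
      rw [hd, pow_succ]
      have hm0 : 3 ^ t0.depth ≤ 3 ^ (max t0.depth t1.depth) :=
        Nat.pow_le_pow_right (by norm_num) (le_max_left _ _)
      have hm1 : 3 ^ t1.depth ≤ 3 ^ (max t0.depth t1.depth) :=
        Nat.pow_le_pow_right (by norm_num) (le_max_right _ _)
      omega


/-- for every Boolean function `f`, the depth of any AND decision tree
computing `f` is at least `log₃` of the number of monomials with nonzero coefficient in the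
unique real multilinear polynomial representing `f`. -/
theorem stmt13 (n : ℕ) (f : (Fin n → Bool) → Bool)
    (a : Finset (Fin n) → ℝ)
    (ha : ∀ x : Fin n → Bool,
      (∑ S : Finset (Fin n), a S * ∏ i ∈ S, (if x i then (1 : ℝ) else 0))
        = (if f x then 1 else 0))
    (T : QTree (Fin n)) (hT : ∀ x, T.andEval x = f x) :
    Real.logb 3 ((Finset.univ.filter fun S : Finset (Fin n) => a S ≠ 0).card) ≤ T.depth := by
  obtain ⟨b, hb, hbc⟩ := tree_sparse T
  have hab : ∀ S, a S = b S := by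
    have hz : ∀ S, (fun S => a S - b S) S = 0 := by
      apply zero_of_eval_zero
      intro x
      unfold mEval
      rw [Finset.sum_congr rfl (fun U _ => show
        (fun S => a S - b S) U * chi U x = a U * chi U x - b U * chi U x from by ring)]
      rw [Finset.sum_sub_distrib]
      have ha' : (∑ S : Finset (Fin n), a S * chi S x) = if f x then 1 else 0 := ha x
      have hb' : (∑ S : Finset (Fin n), b S * chi S x)
          = if T.andEval x = true then 1 else 0 := hb x
      rw [ha', hb', hT x]
      ring
    intro S
    simpa [sub_eq_zero] using hz S
  have hcard : (Finset.univ.filter fun S : Finset (Fin n) => a S ≠ 0).card ≤ 3 ^ T.depth := by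
    have heq : (Finset.univ.filter fun S : Finset (Fin n) => a S ≠ 0)
        = (Finset.univ.filter fun S => b S ≠ 0) := by
      apply Finset.filter_congr
      intro S _
      rw [hab S]
    rw [heq]; exact hbc
  rcases Nat.eq_zero_or_pos (Finset.univ.filter fun S : Finset (Fin n) => a S ≠ 0).card
    with h0 | hpos
  · rw [h0]
    simp
  · have h1 : (0:ℝ) < ((Finset.univ.filter fun S : Finset (Fin n) => a S ≠ 0).card : ℝ) := by
      exact_mod_cast hpos
    have hle : ((Finset.univ.filter fun S : Finset (Fin n) => a S ≠ 0).card : ℝ)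
        ≤ (3:ℝ) ^ T.depth := by
      exact_mod_cast hcard
    calc Real.logb 3 _ ≤ Real.logb 3 ((3:ℝ) ^ T.depth) :=
          Real.logb_le_logb_of_le (by norm_num) h1 hle
      _ = T.depth := by
          rw [Real.logb_pow, Real.logb_self_eq_one (by norm_num)]
          ring
end

section
/- Let n > 1 and let G ⊆ K_{n,n} be a graph that is covered by Hall violators but is not totally ordered. Then the coefficient a*_G of G in the unique real multilinear polynomial representing the dual function BPM*_n is zero. Consequently, every G with a*_G ≠ 0 is totally ordered. -/
open Finset
open scoped Classical

/-- `H` is a Hall violator: a complete bipartite graph `K_{X,Y}` with `|X| + |Y| = n + 1`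
(the remaining vertices isolated). -/
def HallViolator {n : ℕ} (H : Finset (Edge n)) : Prop :=
  ∃ X Y : Finset (Fin n), X.card + Y.card = n + 1 ∧ H = X ×ˢ Y

/-- `G` is covered by Hall violators: its edge set is a nonempty union of Hall violators. -/
def HVCovered {n : ℕ} (G : Finset (Edge n)) : Prop :=
  ∃ S : Finset (Finset (Edge n)), S.Nonempty ∧ (∀ H ∈ S, HallViolator H) ∧ S.sup id = G

/-- The neighbourhood of a left vertex `a` in the bipartite graph `G`. -/
def nbhd {n : ℕ} (G : Finset (Edge n)) (a : Fin n) : Finset (Fin n) :=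
  (G.filter fun e => e.1 = a).image Prod.snd

/-- `G` is totally ordered: its left vertices can be ordered so that their neighbourhoods
are nested, `N(a_1) ⊇ N(a_2) ⊇ … ⊇ N(a_n)`. -/
def totallyOrdered {n : ℕ} (G : Finset (Edge n)) : Prop :=
  ∃ σ : Equiv.Perm (Fin n), ∀ i j : Fin n, i ≤ j → nbhd G (σ j) ⊆ nbhd G (σ i)

/-- `G` is strictly totally ordered:
`N(a_1) ⊋ N(a_2) ⊋ … ⊋ N(a_n) ⊋ ∅` for some ordering of the left vertices. -/
def strictlyTotallyOrdered {n : ℕ} (G : Finset (Edge n)) : Prop :=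
  ∃ σ : Equiv.Perm (Fin n),
    (∀ i j : Fin n, i < j → nbhd G (σ j) ⊂ nbhd G (σ i)) ∧
    ∀ i : Fin n, (nbhd G (σ i)).Nonempty

section Stmt17Aux

variable {n : ℕ}

/-- The finset of all Hall violators contained in `E`. -/
noncomputable def HVset (n : ℕ) (E : Finset (Edge n)) : Finset (Finset (Edge n)) :=
  Finset.univ.filter (fun H => HallViolator H ∧ H ⊆ E)

lemma mem_HVset {E H : Finset (Edge n)} :
    H ∈ HVset n E ↔ HallViolator H ∧ H ⊆ E := by
  simp [HVset]

/-- Signed count of families of Hall violators covering `E`. -/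
noncomputable def qq (n : ℕ) (E : Finset (Edge n)) : ℝ :=
  ∑ F ∈ (HVset n E).powerset.filter (fun F => F.sup id = E), (-1 : ℝ) ^ F.card

/-- Candidate coefficient function. -/
noncomputable def cc (n : ℕ) (E : Finset (Edge n)) : ℝ :=
  (if E = ∅ then 1 else 0) - qq n E

lemma mem_nbhd {G : Finset (Edge n)} {u y : Fin n} : y ∈ nbhd G u ↔ (u, y) ∈ G := by
  simp only [nbhd, Finset.mem_image, Finset.mem_filter]
  constructor
  · rintro ⟨⟨e1, e2⟩, ⟨heG, he1⟩, he2⟩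
    simp only [] at he1 he2
    subst he1; subst he2; exact heG
  · intro h
    exact ⟨(u, y), ⟨h, rfl⟩, rfl⟩

/-- zeta transform of `qq`. -/
lemma sum_qq (w : Finset (Edge n)) :
    ∑ x ∈ w.powerset, qq n x = if HVset n w = ∅ then 1 else 0 := by
  have hmaps : ∀ F ∈ (HVset n w).powerset, F.sup id ∈ w.powerset := by
    intro F hF
    rw [Finset.mem_powerset] at hF ⊢
    rw [← Finset.le_iff_subset]
    exact Finset.sup_le fun H hH => Finset.le_iff_subset.mpr (mem_HVset.mp (hF hH)).2
  have hfib := Finset.sum_fiberwise_of_maps_to hmaps (fun F => (-1 : ℝ) ^ F.card)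
  have hstep : ∑ x ∈ w.powerset, qq n x
      = ∑ x ∈ w.powerset, ∑ F ∈ (HVset n w).powerset.filter (fun F => F.sup id = x),
          (-1 : ℝ) ^ F.card := by
    apply Finset.sum_congr rfl
    intro x hx
    rw [Finset.mem_powerset] at hx
    rw [qq]
    congr 1
    ext F
    simp only [Finset.mem_filter, Finset.mem_powerset]
    constructor
    · rintro ⟨hsub, hsup⟩
      refine ⟨fun H hH => ?_, hsup⟩
      obtain ⟨h1, h2⟩ := mem_HVset.mp (hsub hH)
      exact mem_HVset.mpr ⟨h1, h2.trans hx⟩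
    · rintro ⟨hsub, hsup⟩
      refine ⟨fun H hH => ?_, hsup⟩
      obtain ⟨h1, h2⟩ := mem_HVset.mp (hsub hH)
      refine mem_HVset.mpr ⟨h1, ?_⟩
      have hle := Finset.le_sup (f := id) hH
      rw [hsup] at hle
      exact Finset.le_iff_subset.mp hle
  rw [hstep, hfib]
  have hcast : ∑ F ∈ (HVset n w).powerset, (-1 : ℝ) ^ F.card
      = ((∑ F ∈ (HVset n w).powerset, (-1 : ℤ) ^ F.card : ℤ) : ℝ) := by
    push_cast
    rfl
  rw [hcast, Finset.sum_powerset_neg_one_pow_card]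
  split <;> simp

lemma qq_eq_zero_of_not_cover {G : Finset (Edge n)} (h : (HVset n G).sup id ≠ G) :
    qq n G = 0 := by
  rw [qq]
  apply Finset.sum_eq_zero
  intro F hF
  exfalso
  rw [Finset.mem_filter, Finset.mem_powerset] at hF
  apply h
  apply le_antisymm
  · exact Finset.sup_le fun H hH => Finset.le_iff_subset.mpr (mem_HVset.mp hH).2
  · calc G = F.sup id := hF.2.symm
      _ ≤ (HVset n G).sup id := Finset.sup_mono hF.1

lemma hv_blocks {T H : Finset (Edge n)} (hH : HallViolator H) (hsub : H ⊆ T)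
    (σ : Equiv.Perm (Fin n)) : ∃ i, (i, σ i) ∈ T := by
  obtain ⟨X, Y, hcard, rfl⟩ := hH
  have h1 : (X.image σ ∪ Y).card ≤ n := by
    calc (X.image σ ∪ Y).card ≤ (Finset.univ : Finset (Fin n)).card := Finset.card_le_univ _
      _ = n := by simp
  have h2 : (X.image σ).card = X.card := Finset.card_image_of_injective _ σ.injective
  have h3 := Finset.card_union_add_card_inter (X.image σ) Y
  have h4 : 0 < ((X.image σ) ∩ Y).card := by omega
  obtain ⟨y, hy⟩ := Finset.card_pos.mp h4
  rw [Finset.mem_inter] at hy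
  obtain ⟨i, hiX, hfi⟩ := Finset.mem_image.mp hy.1
  refine ⟨i, hsub (Finset.mem_product.mpr ⟨hiX, ?_⟩)⟩
  rw [hfi]
  exact hy.2

lemma exists_hv_of_block {T : Finset (Edge n)}
    (h : ∀ σ : Equiv.Perm (Fin n), ∃ i, (i, σ i) ∈ T) :
    ∃ H, HallViolator H ∧ H ⊆ T := by
  by_contra hno
  push_neg at hno
  set t : Fin n → Finset (Fin n) := fun i => Finset.univ.filter (fun y => (i, y) ∉ T) with ht
  have hall : ¬ ∀ s : Finset (Fin n), s.card ≤ (s.biUnion t).card := by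
    intro hcond
    obtain ⟨f, hinj, hf⟩ := (Finset.all_card_le_biUnion_card_iff_exists_injective t).mp hcond
    have hbij : Function.Bijective f := Finite.injective_iff_bijective.mp hinj
    obtain ⟨i, hi⟩ := h (Equiv.ofBijective f hbij)
    have h2 : f i ∈ t i := hf i
    rw [ht] at h2
    simp only [Finset.mem_filter, Finset.mem_univ, true_and] at h2
    exact h2 hi
  push_neg at hall
  obtain ⟨X, hX⟩ := hall
  set Y := Finset.univ \ X.biUnion t with hY
  have hYsub : X ×ˢ Y ⊆ T := by
    intro e he
    rw [Finset.mem_product] at he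
    have h2 := he.2
    rw [hY, Finset.mem_sdiff] at h2
    by_contra hnotin
    apply h2.2
    apply Finset.mem_biUnion.mpr
    refine ⟨e.1, he.1, ?_⟩
    rw [ht]
    simp only [Finset.mem_filter, Finset.mem_univ, true_and]
    rwa [Prod.mk.eta]
  have hbicard : (X.biUnion t).card < X.card := hX
  have hbile : (X.biUnion t).card ≤ n := by
    calc (X.biUnion t).card ≤ (Finset.univ : Finset (Fin n)).card := Finset.card_le_univ _
      _ = n := by simp
  have hXle : X.card ≤ n := by
    calc X.card ≤ (Finset.univ : Finset (Fin n)).card := Finset.card_le_univ _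
      _ = n := by simp
  have hYcard : Y.card = n - (X.biUnion t).card := by
    rw [hY, Finset.card_sdiff_of_subset (Finset.subset_univ _)]
    simp
  obtain ⟨Y', hY'sub, hY'card⟩ := Finset.exists_subset_card_eq (s := Y) (n := n + 1 - X.card) (by omega)
  apply hno (X ×ˢ Y') ⟨X, Y', by omega, rfl⟩
  exact (Finset.product_subset_product (Finset.Subset.refl X) hY'sub).trans hYsub

lemma sum_a_powerset (a : Finset (Edge n) → ℝ)
    (ha : ∀ x : Edge n → Bool,
      (∑ S : Finset (Edge n), a S * ∏ e ∈ S, (if x e then (1 : ℝ) else 0))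
        = (if BPMb n (fun e => ! x e) then 0 else 1)) (T : Finset (Edge n)) :
    ∑ S ∈ T.powerset, a S = if HVset n T = ∅ then 0 else 1 := by
  have h := ha (fun e => decide (e ∈ T))
  have hL : (∑ S : Finset (Edge n), a S * ∏ e ∈ S, (if decide (e ∈ T) then (1 : ℝ) else 0))
      = ∑ S ∈ T.powerset, a S := by
    have hprod : ∀ S : Finset (Edge n),
        (∏ e ∈ S, (if decide (e ∈ T) then (1 : ℝ) else 0)) = if S ⊆ T then 1 else 0 := by
      intro S
      rw [Finset.prod_boole]
      congr 1
      simp [Finset.subset_iff]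
    calc (∑ S : Finset (Edge n), a S * ∏ e ∈ S, (if decide (e ∈ T) then (1 : ℝ) else 0))
        = ∑ S : Finset (Edge n), (if S ⊆ T then a S else 0) := by
          apply Finset.sum_congr rfl
          intro S _
          rw [hprod S]
          split <;> simp
      _ = ∑ S ∈ Finset.univ.filter (fun S : Finset (Edge n) => S ⊆ T), a S :=
          (Finset.sum_filter _ _).symm
      _ = ∑ S ∈ T.powerset, a S := by
          congr 1
          ext S
          simp [Finset.mem_powerset]
  have hR : BPMb n (fun e => ! (decide (e ∈ T))) ↔ HVset n T = ∅ := by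
    constructor
    · rintro ⟨σ, hσ⟩
      rw [Finset.eq_empty_iff_forall_notMem]
      intro H hH
      obtain ⟨hHV, hHT⟩ := mem_HVset.mp hH
      obtain ⟨i, hi⟩ := hv_blocks hHV hHT σ
      have := hσ i
      simp only [Bool.not_eq_true', decide_eq_false_iff_not] at this
      exact this hi
    · intro hemp
      by_contra hb
      rw [BPMb] at hb
      push_neg at hb
      have hblock : ∀ σ : Equiv.Perm (Fin n), ∃ i, (i, σ i) ∈ T := by
        intro σ
        obtain ⟨i, hi⟩ := hb σ
        refine ⟨i, ?_⟩
        simpa using hi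
      obtain ⟨H, hHV, hHT⟩ := exists_hv_of_block hblock
      have : H ∈ HVset n T := mem_HVset.mpr ⟨hHV, hHT⟩
      rw [hemp] at this
      simp at this
  rw [hL] at h
  rw [h]
  exact if_congr hR rfl rfl

lemma sum_cc_powerset (T : Finset (Edge n)) :
    ∑ S ∈ T.powerset, cc n S = if HVset n T = ∅ then 0 else 1 := by
  unfold cc
  rw [Finset.sum_sub_distrib, sum_qq]
  have h1 : ∑ S ∈ T.powerset, (if S = ∅ then (1 : ℝ) else 0) = 1 := by
    rw [Finset.sum_ite_eq' T.powerset (∅ : Finset (Edge n)) (fun _ => (1 : ℝ))]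
    simp
  rw [h1]
  split <;> ring

lemma a_eq_cc (a : Finset (Edge n) → ℝ)
    (ha : ∀ x : Edge n → Bool,
      (∑ S : Finset (Edge n), a S * ∏ e ∈ S, (if x e then (1 : ℝ) else 0))
        = (if BPMb n (fun e => ! x e) then 0 else 1)) :
    ∀ T : Finset (Edge n), a T = cc n T := by
  intro T
  induction T using Finset.strongInduction with
  | _ T IH =>
    have h1 := sum_a_powerset a ha T
    have h2 := sum_cc_powerset (n := n) T
    rw [← Finset.add_sum_erase _ a (Finset.mem_powerset_self T)] at h1
    rw [← Finset.add_sum_erase _ (cc n) (Finset.mem_powerset_self T)] at h2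
    have h3 : ∑ S ∈ T.powerset.erase T, a S = ∑ S ∈ T.powerset.erase T, cc n S := by
      apply Finset.sum_congr rfl
      intro S hS
      rw [Finset.mem_erase, Finset.mem_powerset] at hS
      exact IH S (Finset.ssubset_iff_subset_ne.mpr ⟨hS.2, hS.1⟩)
    rw [h3] at h1
    rw [← h2] at h1
    linarith

/-- Weisner-type cancellation. -/
lemma weisner (z : Finset (Edge n)) (hz : (HVset n z).Nonempty) :
    ∀ w : Finset (Edge n), z ⊆ w →
      ∑ x ∈ w.powerset.filter (fun x => x ∪ z = w), qq n x = 0 := by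
  intro w
  induction w using Finset.strongInduction with
  | _ w IH =>
    intro hzw
    have hmaps : ∀ x ∈ w.powerset, x ∪ z ∈ w.powerset.filter (fun w' => z ⊆ w') := by
      intro x hx
      rw [Finset.mem_powerset] at hx
      rw [Finset.mem_filter, Finset.mem_powerset]
      exact ⟨Finset.union_subset hx hzw, Finset.subset_union_right⟩
    have hfib := Finset.sum_fiberwise_of_maps_to hmaps (qq n)
    have hzero : ∑ x ∈ w.powerset, qq n x = 0 := by
      rw [sum_qq, if_neg]
      obtain ⟨H, hH⟩ := hz
      obtain ⟨h1, h2⟩ := mem_HVset.mp hH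
      exact Finset.nonempty_iff_ne_empty.mp ⟨H, mem_HVset.mpr ⟨h1, h2.trans hzw⟩⟩
    rw [hzero] at hfib
    have hinner : ∀ w' ∈ w.powerset.filter (fun w' => z ⊆ w'),
        ∑ x ∈ w.powerset.filter (fun x => x ∪ z = w'), qq n x
          = ∑ x ∈ w'.powerset.filter (fun x => x ∪ z = w'), qq n x := by
      intro w' hw'
      rw [Finset.mem_filter, Finset.mem_powerset] at hw'
      congr 1
      ext x
      simp only [Finset.mem_filter, Finset.mem_powerset]
      constructor
      · rintro ⟨hxw, hxu⟩
        exact ⟨by rw [← hxu]; exact Finset.subset_union_left, hxu⟩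
      · rintro ⟨hxw', hxu⟩
        exact ⟨hxw'.trans hw'.1, hxu⟩
    have hwmem : w ∈ w.powerset.filter (fun w' => z ⊆ w') := by
      rw [Finset.mem_filter, Finset.mem_powerset]
      exact ⟨Finset.Subset.refl w, hzw⟩
    rw [← Finset.add_sum_erase _ _ hwmem] at hfib
    have hrest : ∑ w' ∈ (w.powerset.filter (fun w' => z ⊆ w')).erase w,
        ∑ x ∈ w.powerset.filter (fun x => x ∪ z = w'), qq n x = 0 := by
      apply Finset.sum_eq_zero
      intro w' hw'
      have hw'2 := Finset.mem_of_mem_erase hw'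
      have hne := Finset.ne_of_mem_erase hw'
      rw [Finset.mem_filter, Finset.mem_powerset] at hw'2
      rw [hinner w' (Finset.mem_of_mem_erase hw')]
      exact IH w' (Finset.ssubset_iff_subset_ne.mpr ⟨hw'2.1, hne⟩) hw'2.2
    rw [hrest] at hfib
    have := hinner w hwmem
    rw [this] at hfib
    linarith

/-- Key combinatorial dichotomy for pairs of Hall violators. -/
lemma dichotomy {G : Finset (Edge n)} {X1 Y1 X2 Y2 : Finset (Fin n)}
    (h1 : X1 ×ˢ Y1 ⊆ G) (h2 : X2 ×ˢ Y2 ⊆ G)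
    (c1 : X1.card + Y1.card = n + 1) (c2 : X2.card + Y2.card = n + 1) :
    ∃ X3 Y3 : Finset (Fin n), X3 ×ˢ Y3 ⊆ G ∧ X3.card + Y3.card = n + 1 ∧
      (X3 = X1 ∩ X2 ∨ (X3 = X1 ∪ X2 ∧ Y3 ⊆ Y1 ∩ Y2)) := by
  have hXu : (X1 ∪ X2).card ≤ n := by
    calc (X1 ∪ X2).card ≤ (Finset.univ : Finset (Fin n)).card := Finset.card_le_univ _
      _ = n := by simp
  have hYu : (Y1 ∪ Y2).card ≤ n := by
    calc (Y1 ∪ Y2).card ≤ (Finset.univ : Finset (Fin n)).card := Finset.card_le_univ _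
      _ = n := by simp
  have hiu : (X1 ∩ X2).card + (X1 ∪ X2).card = X1.card + X2.card :=
    Finset.card_inter_add_card_union _ _
  have hiuY : (Y1 ∩ Y2).card + (Y1 ∪ Y2).card = Y1.card + Y2.card :=
    Finset.card_inter_add_card_union _ _
  have hX12 : (X1 ∩ X2).card ≤ X1.card := Finset.card_le_card Finset.inter_subset_left
  by_cases hc : n + 1 ≤ (X1 ∩ X2).card + (Y1 ∪ Y2).card
  · obtain ⟨Y3, hY3sub, hY3card⟩ :=
      Finset.exists_subset_card_eq (s := Y1 ∪ Y2) (n := n + 1 - (X1 ∩ X2).card) (by omega)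
    refine ⟨X1 ∩ X2, Y3, ?_, by omega, Or.inl rfl⟩
    intro e he
    rw [Finset.mem_product] at he
    rcases Finset.mem_union.mp (hY3sub he.2) with h | h
    · exact h1 (Finset.mem_product.mpr ⟨(Finset.mem_inter.mp he.1).1, h⟩)
    · exact h2 (Finset.mem_product.mpr ⟨(Finset.mem_inter.mp he.1).2, h⟩)
  · push_neg at hc
    obtain ⟨Y3, hY3sub, hY3card⟩ :=
      Finset.exists_subset_card_eq (s := Y1 ∩ Y2) (n := n + 1 - (X1 ∪ X2).card) (by omega)
    refine ⟨X1 ∪ X2, Y3, ?_, by omega, Or.inr ⟨rfl, hY3sub⟩⟩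
    intro e he
    rw [Finset.mem_product] at he
    rcases Finset.mem_union.mp he.1 with h | h
    · exact h1 (Finset.mem_product.mpr ⟨h, (Finset.mem_inter.mp (hY3sub he.2)).1⟩)
    · exact h2 (Finset.mem_product.mpr ⟨h, (Finset.mem_inter.mp (hY3sub he.2)).2⟩)

/-- Existence of a Hall violator avoiding both witness edges. -/
lemma exists_avoiding_hv {G : Finset (Edge n)} {u v p q : Fin n}
    (hup : (u, p) ∈ G) (hvq : (v, q) ∈ G) (hvp : (v, p) ∉ G) (huq : (u, q) ∉ G)
    (hcov : (HVset n G).sup id = G) :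
    ∃ H0 : Finset (Edge n), HallViolator H0 ∧ H0 ⊆ G ∧ (u, p) ∉ H0 ∧ (v, q) ∉ H0 := by
  have hup' : (u, p) ∈ (HVset n G).sup id := by rw [hcov]; exact hup
  have hvq' : (v, q) ∈ (HVset n G).sup id := by rw [hcov]; exact hvq
  obtain ⟨H1, hH1, hup1⟩ := Finset.mem_sup.mp hup'
  obtain ⟨H2, hH2, hvq2⟩ := Finset.mem_sup.mp hvq'
  obtain ⟨hHV1, hH1G⟩ := mem_HVset.mp hH1
  obtain ⟨hHV2, hH2G⟩ := mem_HVset.mp hH2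
  obtain ⟨X1, Y1, c1, rfl⟩ := hHV1
  obtain ⟨X2, Y2, c2, rfl⟩ := hHV2
  simp only [id] at hup1 hvq2 hH1G hH2G
  rw [Finset.mem_product] at hup1 hvq2
  have huX2 : u ∉ X2 := fun hc => huq (hH2G (Finset.mem_product.mpr ⟨hc, hvq2.2⟩))
  have hpY2 : p ∉ Y2 := fun hc => hvp (hH2G (Finset.mem_product.mpr ⟨hvq2.1, hc⟩))
  have hvX1 : v ∉ X1 := fun hc => hvp (hH1G (Finset.mem_product.mpr ⟨hc, hup1.2⟩))
  have hqY1 : q ∉ Y1 := fun hc => huq (hH1G (Finset.mem_product.mpr ⟨hup1.1, hc⟩))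
  obtain ⟨X3, Y3, hsub, hcard, hdisj⟩ := dichotomy hH1G hH2G c1 c2
  refine ⟨X3 ×ˢ Y3, ⟨X3, Y3, hcard, rfl⟩, hsub, ?_, ?_⟩
  · rcases hdisj with h | ⟨h, hY⟩
    · intro hmem
      rw [h, Finset.mem_product, Finset.mem_inter] at hmem
      exact huX2 hmem.1.2
    · intro hmem
      rw [Finset.mem_product] at hmem
      exact hpY2 (Finset.mem_inter.mp (hY hmem.2)).2
  · rcases hdisj with h | ⟨h, hY⟩
    · intro hmem
      rw [h, Finset.mem_product, Finset.mem_inter] at hmem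
      exact hvX1 hmem.1.1
    · intro hmem
      rw [Finset.mem_product] at hmem
      exact hqY1 (Finset.mem_inter.mp (hY hmem.2)).1

lemma nonTO_of_witness {x : Finset (Edge n)} {u v p q : Fin n}
    (hup : (u, p) ∈ x) (hvq : (v, q) ∈ x) (hvp : (v, p) ∉ x) (huq : (u, q) ∉ x) :
    ¬ totallyOrdered x := by
  rintro ⟨σ, hσ⟩
  rcases le_total (σ.symm u) (σ.symm v) with h | h
  · have h2 := hσ _ _ h
    rw [Equiv.apply_symm_apply, Equiv.apply_symm_apply] at h2
    exact huq (mem_nbhd.mp (h2 (mem_nbhd.mpr hvq)))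
  · have h2 := hσ _ _ h
    rw [Equiv.apply_symm_apply, Equiv.apply_symm_apply] at h2
    exact hvp (mem_nbhd.mp (h2 (mem_nbhd.mpr hup)))

lemma witness_of_nonTO {G : Finset (Edge n)} (h : ¬ totallyOrdered G) :
    ∃ u v p q : Fin n, (u, p) ∈ G ∧ (v, q) ∈ G ∧ (v, p) ∉ G ∧ (u, q) ∉ G := by
  by_contra hno
  push_neg at hno
  apply h
  have hcomp : ∀ u v : Fin n, nbhd G u ⊆ nbhd G v ∨ nbhd G v ⊆ nbhd G u := by
    intro u v
    by_contra hcc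
    push_neg at hcc
    obtain ⟨p, hp1, hp2⟩ := Finset.not_subset.mp hcc.1
    obtain ⟨q, hq1, hq2⟩ := Finset.not_subset.mp hcc.2
    exact hq2 (mem_nbhd.mpr
      (hno u v p q (mem_nbhd.mp hp1) (mem_nbhd.mp hq1) (fun hc => hp2 (mem_nbhd.mpr hc))))
  refine ⟨Tuple.sort (fun i : Fin n => n - (nbhd G i).card), ?_⟩
  intro i j hij
  set σ := Tuple.sort (fun i : Fin n => n - (nbhd G i).card) with hσ
  have hm : n - (nbhd G (σ i)).card ≤ n - (nbhd G (σ j)).card :=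
    Tuple.monotone_sort (fun i : Fin n => n - (nbhd G i).card) hij
  have hci : (nbhd G (σ i)).card ≤ n := by
    calc (nbhd G (σ i)).card ≤ (Finset.univ : Finset (Fin n)).card :=
      Finset.card_le_univ _
      _ = n := by simp
  have hcj : (nbhd G (σ j)).card ≤ n := by
    calc (nbhd G (σ j)).card ≤ (Finset.univ : Finset (Fin n)).card :=
      Finset.card_le_univ _
      _ = n := by simp
  have hcard : (nbhd G (σ j)).card ≤ (nbhd G (σ i)).card := by omega
  rcases hcomp (σ j) (σ i) with hsub | hsub
  · exact hsub
  · exact Finset.le_iff_subset.mp (ge_of_eq (Finset.eq_of_subset_of_card_le hsub hcard))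

/-- Main vanishing lemma. -/
lemma main_vanish :
    ∀ G : Finset (Edge n), (HVset n G).sup id = G → ¬ totallyOrdered G → qq n G = 0 := by
  intro G
  induction G using Finset.strongInduction with
  | _ G IH =>
    intro hcov hnTO
    obtain ⟨u, v, p, q, hup, hvq, hvp, huq⟩ := witness_of_nonTO hnTO
    obtain ⟨H0, hH0hv, hH0G, hupH0, hvqH0⟩ := exists_avoiding_hv hup hvq hvp huq hcov
    have hzne : (HVset n H0).Nonempty :=
      ⟨H0, mem_HVset.mpr ⟨hH0hv, Finset.Subset.refl _⟩⟩
    have hW := weisner H0 hzne G hH0G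
    have hGmem : G ∈ G.powerset.filter (fun x => x ∪ H0 = G) := by
      rw [Finset.mem_filter, Finset.mem_powerset]
      exact ⟨Finset.Subset.refl G, Finset.union_eq_left.mpr hH0G⟩
    rw [← Finset.add_sum_erase _ _ hGmem] at hW
    have hrest : ∑ x ∈ (G.powerset.filter (fun x => x ∪ H0 = G)).erase G, qq n x = 0 := by
      apply Finset.sum_eq_zero
      intro x hx
      have hxne := Finset.ne_of_mem_erase hx
      have hx2 := Finset.mem_of_mem_erase hx
      rw [Finset.mem_filter, Finset.mem_powerset] at hx2
      obtain ⟨hxG, hxu⟩ := hx2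
      by_cases hcx : (HVset n x).sup id = x
      · apply IH x (Finset.ssubset_iff_subset_ne.mpr ⟨hxG, hxne⟩) hcx
        have hupx : (u, p) ∈ x := by
          have hin : (u, p) ∈ x ∪ H0 := by rw [hxu]; exact hup
          rcases Finset.mem_union.mp hin with h' | h'
          · exact h'
          · exact absurd h' hupH0
        have hvqx : (v, q) ∈ x := by
          have hin : (v, q) ∈ x ∪ H0 := by rw [hxu]; exact hvq
          rcases Finset.mem_union.mp hin with h' | h'
          · exact h'
          · exact absurd h' hvqH0
        exact nonTO_of_witness hupx hvqx (fun hc => hvp (hxG hc)) (fun hc => huq (hxG hc))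
      · exact qq_eq_zero_of_not_cover hcx
    rw [hrest] at hW
    linarith

lemma empty_TO : totallyOrdered (∅ : Finset (Edge n)) := by
  refine ⟨Equiv.refl _, ?_⟩
  intro i j _
  simp only [nbhd]
  intro y hy
  exfalso
  obtain ⟨e, he, _⟩ := Finset.mem_image.mp hy
  exact Finset.notMem_empty e (Finset.mem_filter.mp he).1

end Stmt17Aux

/-- for `n > 1`, in the unique real multilinear polynomial representing the
dual function `BPM*_n(x) = 1 − BPM_n(1−x)`, every graph `G` that is covered by Hall
violators but not totally ordered has coefficient `a*_G = 0`; consequently every `G` with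
`a*_G ≠ 0` is totally ordered. -/
theorem stmt17 (n : ℕ) (hn : 1 < n) (a : Finset (Edge n) → ℝ)
    (ha : ∀ x : Edge n → Bool,
      (∑ S : Finset (Edge n), a S * ∏ e ∈ S, (if x e then (1 : ℝ) else 0))
        = (if BPMb n (fun e => ! x e) then 0 else 1)) :
    (∀ G : Finset (Edge n), HVCovered G → ¬ totallyOrdered G → a G = 0) ∧
    (∀ G : Finset (Edge n), a G ≠ 0 → totallyOrdered G) := by
  have key : ∀ G : Finset (Edge n), (HVset n G).sup id = G → ¬ totallyOrdered G → a G = 0 := by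
    intro G hcov hnTO
    have h1 : a G = cc n G := a_eq_cc a ha G
    have h2 : qq n G = 0 := main_vanish G hcov hnTO
    have h3 : G ≠ ∅ := fun hc => hnTO (hc ▸ empty_TO)
    rw [h1]
    unfold cc
    rw [h2, if_neg h3]
    ring
  constructor
  · intro G hcovd hnTO
    obtain ⟨S, hSne, hSHV, hSsup⟩ := hcovd
    have hcov : (HVset n G).sup id = G := by
      apply le_antisymm
      · exact Finset.sup_le fun H hH => (mem_HVset.mp hH).2
      · calc G = S.sup id := hSsup.symm
          _ ≤ (HVset n G).sup id := by
              apply Finset.sup_mono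
              intro H hH
              refine mem_HVset.mpr ⟨hSHV H hH, ?_⟩
              have hle := Finset.le_sup (f := id) hH
              rw [hSsup] at hle
              exact Finset.le_iff_subset.mp hle
    exact key G hcov hnTO
  · intro G haG
    by_contra hnTO
    apply haG
    by_cases hcov : (HVset n G).sup id = G
    · exact key G hcov hnTO
    · have h1 : a G = cc n G := a_eq_cc a ha G
      have h3 : G ≠ ∅ := fun hc => hnTO (hc ▸ empty_TO)
      rw [h1]
      unfold cc
      rw [qq_eq_zero_of_not_cover hcov, if_neg h3]
      ring
end
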